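/- arXiv:2306.11997 — 6 statements merged into one kernel-verified Lean document; each statement's English description precedes it below -/
import Mathlib

section
/- Let p ≡ 1 (mod 6) be a prime, let ω be a generator of the multiplicative group of the field Z_p, and set ε = ω^{(p−1)/6}. Then the (p−1)/6 blocks {(0,0), (1,ω^i), (1,ε²·ω^i), (1,ε⁴·ω^i)} for 0 ≤ i < (p−1)/6 form a (G,H,4,1)-difference family over G = Z_2 × Z_p with H = Z_2 × {0}; in particular, a (2p,2,4,1)-CDF exists for every prime p ≡ 1 (mod 6). -/
/-- The multiset of differences `f - f'` (with `f ≠ f'`) from a finset `F`. -/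
def blockDiffs {G : Type*} [AddGroup G] [DecidableEq G] (F : Finset G) : Multiset G :=
  ((F ×ˢ F).filter fun p => p.1 ≠ p.2).val.map fun p => p.1 - p.2

/-- A `(gh,h,k,1)`-CDF (cyclic relative difference family): a family `𝓕` of
`k`-element subsets of `Z_{gh}` (base blocks, possibly with repetitions) such that
the multiset of differences from all base blocks contains every element of
`Z_{gh}` outside the subgroup `H = g·Z_{gh}` (of order `h`) exactly once and
contains no element of `H`. -/
def IsCDF (g h k : ℕ) (𝓕 : Multiset (Finset (ZMod (g * h)))) : Prop :=
  (∀ F ∈ 𝓕, F.card = k) ∧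
  (∀ x : ZMod (g * h), x ∈ AddSubgroup.zmultiples ((g : ZMod (g * h))) →
    (𝓕.bind blockDiffs).count x = 0) ∧
  (∀ x : ZMod (g * h), x ∉ AddSubgroup.zmultiples ((g : ZMod (g * h))) →
    (𝓕.bind blockDiffs).count x = 1)
/-- A `(G,H,k,1)`-difference family over a general additive group. -/
def IsDF {G : Type*} [AddGroup G] [DecidableEq G] (H : AddSubgroup G) (k : ℕ)
    (𝓕 : Multiset (Finset G)) : Prop :=
  (∀ F ∈ 𝓕, F.card = k) ∧
  (∀ x : G, x ∈ H → (𝓕.bind blockDiffs).count x = 0) ∧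
  (∀ x : G, x ∉ H → (𝓕.bind blockDiffs).count x = 1)


lemma blockDiffs_quad {G : Type*} [AddGroup G] [DecidableEq G] {a b c d : G}
    (hab : a ≠ b) (hac : a ≠ c) (had : a ≠ d) (hbc : b ≠ c) (hbd : b ≠ d) (hcd : c ≠ d) :
    blockDiffs ({a,b,c,d} : Finset G) =
      {d-c, d-b, d-a, c-b, c-a, c-d, b-c, b-a, b-d, a-c, a-b, a-d} := by
  have hval : ({a,b,c,d} : Finset G).val = a ::ₘ b ::ₘ c ::ₘ {d} := by
    rw [Finset.insert_val_of_notMem (by simp [hab, hac, had]),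
        Finset.insert_val_of_notMem (by simp [hbc, hbd]),
        Finset.insert_val_of_notMem (by simp [hcd]), Finset.singleton_val]
  unfold blockDiffs
  rw [Finset.filter_val, Finset.product_val, hval]
  simp only [Multiset.cons_product, Multiset.product_singleton, Multiset.map_cons,
    Multiset.map_singleton]
  simp only [Multiset.filter_add, Multiset.filter_cons, Multiset.filter_singleton,
    Multiset.map_add, ne_eq]
  simp [hab, hac, had, hbc, hbd, hcd, hab.symm, hac.symm, had.symm, hbc.symm, hbd.symm, hcd.symm]
  rw [Multiset.filter_singleton, if_neg (by simp)]
  simp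


lemma key_count (p : ℕ) [Fact p.Prime] (n : ℕ) (hn : 0 < n) (ω : (ZMod p)ˣ)
    (hord : orderOf ω = 6 * n) (hω : ∀ u : (ZMod p)ˣ, u ∈ Subgroup.zpowers ω)
    (u y : ZMod p) (hu : u ≠ 0) (hy : y ≠ 0) :
    ∑ i ∈ Finset.range n, ∑ j ∈ Finset.range 6,
      (if y = u * (ω : ZMod p) ^ (n * j + i) then 1 else 0) = 1 := by
  obtain ⟨m, hm⟩ := mem_powers_iff_mem_zpowers.mpr (hω ((Units.mk0 u hu)⁻¹ * Units.mk0 y hy))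
  obtain ⟨m', hm'lt, hωm'⟩ :
      ∃ m', m' < 6 * n ∧ ω ^ m' = (Units.mk0 u hu)⁻¹ * Units.mk0 y hy :=
    ⟨m % (6 * n), Nat.mod_lt _ (by omega), by rw [← hord, pow_mod_orderOf]; exact hm⟩
  have hcond : ∀ i < n, ∀ j < 6,
      ((y = u * (ω : ZMod p) ^ (n * j + i)) ↔ (i = m' % n ∧ j = m' / n)) := by
    intro i hi j hj
    have hlt : n * j + i < 6 * n := by
      have : n * j ≤ n * 5 := Nat.mul_le_mul_left n (by omega)
      omega
    have h1 : (y = u * (ω : ZMod p) ^ (n * j + i)) ↔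
        ((Units.mk0 u hu)⁻¹ * Units.mk0 y hy = ω ^ (n * j + i)) := by
      rw [Units.ext_iff, Units.val_pow_eq_pow_val, Units.val_mul]
      simp only [Units.val_inv_eq_inv_val, Units.val_mk0]
      rw [inv_mul_eq_iff_eq_mul₀ hu]
    have h2 : ((Units.mk0 u hu)⁻¹ * Units.mk0 y hy = ω ^ (n * j + i)) ↔ m' = n * j + i := by
      rw [← hωm', pow_eq_pow_iff_modEq, hord]
      constructor
      · intro h
        have h' : m' % (6 * n) = (n * j + i) % (6 * n) := h
        rwa [Nat.mod_eq_of_lt hm'lt, Nat.mod_eq_of_lt hlt] at h'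
      · intro h; rw [h]
    have h3 : (m' = n * j + i) ↔ (i = m' % n ∧ j = m' / n) := by
      constructor
      · rintro rfl
        rw [Nat.add_comm, Nat.mul_comm, Nat.add_mul_mod_self_right,
          Nat.add_mul_div_right _ _ hn, Nat.mod_eq_of_lt hi, Nat.div_eq_of_lt hi]
        exact ⟨rfl, by omega⟩
      · rintro ⟨rfl, rfl⟩
        exact (Nat.div_add_mod m' n).symm
    rw [h1, h2, h3]
  have hAlt : m' % n < n := Nat.mod_lt _ hn
  have hBlt : m' / n < 6 := by
    rw [Nat.div_lt_iff_lt_mul hn]; omega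
  calc ∑ i ∈ Finset.range n, ∑ j ∈ Finset.range 6,
        (if y = u * (ω : ZMod p) ^ (n * j + i) then 1 else 0)
      = ∑ i ∈ Finset.range n, (if i = m' % n then 1 else 0) := by
        refine Finset.sum_congr rfl fun i hi => ?_
        rw [Finset.mem_range] at hi
        by_cases hiA : i = m' % n
        · subst hiA
          rw [if_pos rfl]
          have hc : ∀ j ∈ Finset.range 6,
              (if y = u * (ω : ZMod p) ^ (n * j + m' % n) then 1 else 0)
                = (if j = m' / n then 1 else 0) := by
            intro j hj
            rw [Finset.mem_range] at hj
            simp only [hcond _ hAlt _ hj]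
            simp
          rw [Finset.sum_congr rfl hc,
            Finset.sum_ite_eq' (Finset.range 6) (m' / n) (fun _ => 1),
            if_pos (Finset.mem_range.mpr hBlt)]
        · rw [if_neg hiA]
          refine Finset.sum_eq_zero fun j hj => ?_
          rw [Finset.mem_range] at hj
          rw [if_neg]
          rw [hcond _ hi _ hj]
          tauto
    _ = 1 := by
        rw [Finset.sum_ite_eq' (Finset.range n) (m' % n) (fun _ => 1),
          if_pos (Finset.mem_range.mpr hAlt)]




lemma blockDiffs_map {G G' : Type*} [AddGroup G] [AddGroup G'] [DecidableEq G] [DecidableEq G']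
    (e : G ≃+ G') (F : Finset G) :
    blockDiffs (F.map ⟨e, e.injective⟩) = (blockDiffs F).map e := by
  unfold blockDiffs
  simp only [Finset.filter_val, Finset.product_val, Finset.map_val, Function.Embedding.coeFn_mk]
  have hprod : (F.val.map e) ×ˢ (F.val.map e) = (F.val ×ˢ F.val).map (Prod.map e e) := by
    show (F.val.map e).bind (fun a => (F.val.map e).map (Prod.mk a))
      = ((F.val.bind fun a => F.val.map (Prod.mk a)).map (Prod.map e e))
    rw [Multiset.bind_map, Multiset.map_bind]
    refine Multiset.bind_congr fun a _ => ?_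
    rw [Multiset.map_map, Multiset.map_map]
    rfl
  rw [hprod, Multiset.filter_map,
    Multiset.filter_congr (q := fun q : G × G => (q.1 ≠ q.2))
      (fun x _ => by simp [Function.comp, Prod.map, e.injective.eq_iff]),
    Multiset.map_map, Multiset.map_map]
  refine Multiset.map_congr rfl fun x _ => ?_
  show (Prod.map e e x).1 - (Prod.map e e x).2 = e (x.1 - x.2)
  simp [Prod.map, map_sub]

lemma isDF_map {G G' : Type*} [AddGroup G] [AddGroup G'] [DecidableEq G] [DecidableEq G']
    (e : G ≃+ G') {H : AddSubgroup G} {H' : AddSubgroup G'}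
    (hH : ∀ x : G, x ∈ H ↔ e x ∈ H') {k : ℕ} {𝓕 : Multiset (Finset G)}
    (h : IsDF H k 𝓕) : IsDF H' k (𝓕.map (Finset.map ⟨e, e.injective⟩)) := by
  obtain ⟨h1, h2, h3⟩ := h
  have hbind : (𝓕.map (Finset.map ⟨e, e.injective⟩)).bind blockDiffs
      = (𝓕.bind blockDiffs).map e := by
    rw [Multiset.bind_map, Multiset.map_bind]
    exact Multiset.bind_congr fun F _ => blockDiffs_map e F
  have hcount : ∀ x' : G', ((𝓕.map (Finset.map ⟨e, e.injective⟩)).bind blockDiffs).count x'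
      = (𝓕.bind blockDiffs).count (e.symm x') := by
    intro x'
    rw [hbind]
    have := Multiset.count_map_eq_count' e (𝓕.bind blockDiffs) e.injective (e.symm x')
    rwa [e.apply_symm_apply] at this
  refine ⟨?_, ?_, ?_⟩
  · intro F hF
    obtain ⟨F₀, hF₀, rfl⟩ := Multiset.mem_map.mp hF
    rw [Finset.card_map]
    exact h1 F₀ hF₀
  · intro x hx
    rw [hcount]
    refine h2 _ ?_
    rw [hH, e.apply_symm_apply]
    exact hx
  · intro x hx
    rw [hcount]
    refine h3 _ ?_
    rw [hH, e.apply_symm_apply]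
    exact hx



set_option maxHeartbeats 2000000 in
/-- Let `p ≡ 1 (mod 6)` be a prime, `ω` a generator of the multiplicative group of
`Z_p`, and `ε = ω^((p-1)/6)`. Then the blocks
`{(0,0), (1,ω^i), (1,ε²ω^i), (1,ε⁴ω^i)}`, `0 ≤ i < (p-1)/6`, form a
`(G,H,4,1)`-DF over `G = Z_2 × Z_p` relative to `H = Z_2 × {0}`; in particular a
`(2p,2,4,1)`-CDF exists. -/
theorem stmt_3 (p : ℕ) (hp : p.Prime) (hpmod : p % 6 = 1)
    (ω : (ZMod p)ˣ) (hω : ∀ u : (ZMod p)ˣ, u ∈ Subgroup.zpowers ω)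
    (ε : (ZMod p)ˣ) (hε : ε = ω ^ ((p - 1) / 6)) :
    IsDF ((⊤ : AddSubgroup (ZMod 2)).prod (⊥ : AddSubgroup (ZMod p))) 4
      ((Multiset.range ((p - 1) / 6)).map fun i =>
        ({((0 : ZMod 2), (0 : ZMod p)),
          ((1 : ZMod 2), ((ω : ZMod p)) ^ i),
          ((1 : ZMod 2), ((ε ^ 2 : (ZMod p)ˣ) : ZMod p) * ((ω : ZMod p)) ^ i),
          ((1 : ZMod 2), ((ε ^ 4 : (ZMod p)ˣ) : ZMod p) * ((ω : ZMod p)) ^ i)} :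
            Finset (ZMod 2 × ZMod p))) ∧
    ∃ 𝓕 : Multiset (Finset (ZMod (p * 2))), IsCDF p 2 4 𝓕 := by
  have hp2 := hp.two_le
  have hp7 : 7 ≤ p := by omega
  haveI : Fact p.Prime := ⟨hp⟩
  set n := (p - 1) / 6 with hndef
  have h6n : p - 1 = 6 * n := by omega
  have hn : 0 < n := by omega
  have hordω : orderOf ω = 6 * n := by
    rw [orderOf_eq_card_of_forall_mem_zpowers hω, Nat.card_eq_fintype_card,
      ZMod.card_units, h6n]
  have hWne : (ω : ZMod p) ≠ 0 := ω.ne_zero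
  have hε' : (ε : ZMod p) = (ω : ZMod p) ^ n := by rw [hε]; rfl
  have hεord : orderOf ε = 6 := by
    rw [hε, orderOf_pow, hordω, Nat.gcd_comm, Nat.gcd_eq_left ⟨6, by ring⟩,
      Nat.mul_div_cancel _ hn]
  have hpown : ∀ k : ℕ, ε ^ k = 1 ↔ 6 ∣ k := fun k => by
    rw [← orderOf_dvd_iff_pow_eq_one, hεord]
  have hε6 : ((ω : ZMod p) ^ n) ^ 6 = 1 := by
    rw [← hε']
    have h1 : ε ^ 6 = 1 := (hpown 6).mpr dvd_rfl
    calc (ε : ZMod p) ^ 6 = ((ε ^ 6 : (ZMod p)ˣ) : ZMod p) := rfl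
      _ = 1 := by rw [h1]; rfl
  have hε3 : ((ω : ZMod p) ^ n) ^ 3 = -1 := by
    have h3ne : ((ω : ZMod p) ^ n) ^ 3 ≠ 1 := by
      intro h
      rw [← hε'] at h
      have h' : ε ^ 3 = 1 := Units.ext h
      have := (hpown 3).mp h'
      omega
    have h9 : (((ω : ZMod p) ^ n) ^ 3 - 1) * (((ω : ZMod p) ^ n) ^ 3 + 1) = 0 := by
      linear_combination hε6
    rcases mul_eq_zero.mp h9 with h | h
    · exact absurd (sub_eq_zero.mp h) h3ne
    · linear_combination h
  have hA2 : ((ω : ZMod p) ^ n) ^ 2 ≠ 1 := by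
    intro h
    rw [← hε'] at h
    have := (hpown 2).mp (Units.ext h)
    omega
  have hA4 : ((ω : ZMod p) ^ n) ^ 4 ≠ 1 := by
    intro h
    rw [← hε'] at h
    have := (hpown 4).mp (Units.ext h)
    omega
  have hδ : ((ω : ZMod p) ^ n) ^ 2 - 1 ≠ 0 := sub_ne_zero_of_ne hA2
  have hc2 : ((ε ^ 2 : (ZMod p)ˣ) : ZMod p) = ((ω : ZMod p) ^ n) ^ 2 := by rw [← hε']; rfl
  have hc4 : ((ε ^ 4 : (ZMod p)ˣ) : ZMod p) = ((ω : ZMod p) ^ n) ^ 4 := by rw [← hε']; rfl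
  simp only [hc2, hc4]
  have hXne : ∀ i : ℕ, (ω : ZMod p) ^ i ≠ 0 := fun i => pow_ne_zero _ hWne
  have hne1 : ∀ i : ℕ, (ω : ZMod p) ^ i ≠ ((ω : ZMod p) ^ n) ^ 2 * (ω : ZMod p) ^ i := by
    intro i h
    apply hA2
    have h2 : ((ω : ZMod p) ^ n) ^ 2 * (ω : ZMod p) ^ i = 1 * (ω : ZMod p) ^ i := by
      rw [one_mul, ← h]
    exact mul_right_cancel₀ (hXne i) h2
  have hne2 : ∀ i : ℕ, (ω : ZMod p) ^ i ≠ ((ω : ZMod p) ^ n) ^ 4 * (ω : ZMod p) ^ i := by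
    intro i h
    apply hA4
    have h2 : ((ω : ZMod p) ^ n) ^ 4 * (ω : ZMod p) ^ i = 1 * (ω : ZMod p) ^ i := by
      rw [one_mul, ← h]
    exact mul_right_cancel₀ (hXne i) h2
  have hne3 : ∀ i : ℕ, ((ω : ZMod p) ^ n) ^ 2 * (ω : ZMod p) ^ i
      ≠ ((ω : ZMod p) ^ n) ^ 4 * (ω : ZMod p) ^ i := by
    intro i h
    have h24 : ((ω : ZMod p) ^ n) ^ 2 = ((ω : ZMod p) ^ n) ^ 4 := mul_right_cancel₀ (hXne i) h
    apply hA2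
    have h2 : ((ω : ZMod p) ^ n) ^ 2 * ((ω : ZMod p) ^ n) ^ 2
        = ((ω : ZMod p) ^ n) ^ 2 * 1 := by
      rw [mul_one]
      linear_combination -h24
    exact (mul_left_cancel₀ (pow_ne_zero 2 (pow_ne_zero n hWne)) h2)
  have hab : ∀ i : ℕ, ((0 : ZMod 2), (0 : ZMod p)) ≠ ((1 : ZMod 2), (ω : ZMod p) ^ i) :=
    by
    intro i h
    have h1 : (0 : ZMod 2) = 1 := congrArg Prod.fst h
    exact absurd h1 (by decide)
  have hac : ∀ i : ℕ, ((0 : ZMod 2), (0 : ZMod p))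
      ≠ ((1 : ZMod 2), ((ω : ZMod p) ^ n) ^ 2 * (ω : ZMod p) ^ i) :=
    by
    intro i h
    have h1 : (0 : ZMod 2) = 1 := congrArg Prod.fst h
    exact absurd h1 (by decide)
  have had : ∀ i : ℕ, ((0 : ZMod 2), (0 : ZMod p))
      ≠ ((1 : ZMod 2), ((ω : ZMod p) ^ n) ^ 4 * (ω : ZMod p) ^ i) :=
    by
    intro i h
    have h1 : (0 : ZMod 2) = 1 := congrArg Prod.fst h
    exact absurd h1 (by decide)
  have hbc : ∀ i : ℕ, ((1 : ZMod 2), (ω : ZMod p) ^ i)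
      ≠ ((1 : ZMod 2), ((ω : ZMod p) ^ n) ^ 2 * (ω : ZMod p) ^ i) :=
    fun i h => hne1 i (congrArg Prod.snd h)
  have hbd : ∀ i : ℕ, ((1 : ZMod 2), (ω : ZMod p) ^ i)
      ≠ ((1 : ZMod 2), ((ω : ZMod p) ^ n) ^ 4 * (ω : ZMod p) ^ i) :=
    fun i h => hne2 i (congrArg Prod.snd h)
  have hcd : ∀ i : ℕ, ((1 : ZMod 2), ((ω : ZMod p) ^ n) ^ 2 * (ω : ZMod p) ^ i)
      ≠ ((1 : ZMod 2), ((ω : ZMod p) ^ n) ^ 4 * (ω : ZMod p) ^ i) :=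
    fun i h => hne3 i (congrArg Prod.snd h)
  have hBC : ∀ i : ℕ, blockDiffs
      ({((0 : ZMod 2), (0 : ZMod p)), ((1 : ZMod 2), (ω : ZMod p) ^ i), ((1 : ZMod 2), ((ω : ZMod p) ^ n) ^ 2 * (ω : ZMod p) ^ i), ((1 : ZMod 2), ((ω : ZMod p) ^ n) ^ 4 * (ω : ZMod p) ^ i)} : Finset (ZMod 2 × ZMod p)) =
      ({((0 : ZMod 2), (((ω : ZMod p) ^ n) ^ 2 - 1) * (ω : ZMod p) ^ (n * 2 + i)), ((0 : ZMod 2), (((ω : ZMod p) ^ n) ^ 2 - 1) * (ω : ZMod p) ^ (n * 1 + i)), ((1 : ZMod 2), (1 : ZMod p) * (ω : ZMod p) ^ (n * 4 + i)), ((0 : ZMod 2), (((ω : ZMod p) ^ n) ^ 2 - 1) * (ω : ZMod p) ^ (n * 0 + i)), ((1 : ZMod 2), (1 : ZMod p) * (ω : ZMod p) ^ (n * 2 + i)), ((0 : ZMod 2), (((ω : ZMod p) ^ n) ^ 2 - 1) * (ω : ZMod p) ^ (n * 5 + i)), ((0 : ZMod 2), (((ω : ZMod p) ^ n) ^ 2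 - 1) * (ω : ZMod p) ^ (n * 3 + i)), ((1 : ZMod 2), (1 : ZMod p) * (ω : ZMod p) ^ (n * 0 + i)), ((0 : ZMod 2), (((ω : ZMod p) ^ n) ^ 2 - 1) * (ω : ZMod p) ^ (n * 4 + i)), ((1 : ZMod 2), (1 : ZMod p) * (ω : ZMod p) ^ (n * 5 + i)), ((1 : ZMod 2), (1 : ZMod p) * (ω : ZMod p) ^ (n * 3 + i)), ((1 : ZMod 2), (1 : ZMod p) * (ω : ZMod p) ^ (n * 1 + i))} : Multiset (ZMod 2 × ZMod p)) := by
    intro i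
    rw [blockDiffs_quad (hab i) (hac i) (had i) (hbc i) (hbd i) (hcd i)]
    have eq1 : (((1 : ZMod 2), ((ω : ZMod p) ^ n) ^ 4 * (ω : ZMod p) ^ i) - ((1 : ZMod 2), ((ω : ZMod p) ^ n) ^ 2 * (ω : ZMod p) ^ i) : ZMod 2 × ZMod p) = ((0 : ZMod 2), (((ω : ZMod p) ^ n) ^ 2 - 1) * (ω : ZMod p) ^ (n * 2 + i)) := by
      refine Prod.ext ?_ ?_
      · show (1 : ZMod 2) - (1 : ZMod 2) = (0 : ZMod 2)
        decide
      · show (((1 : ZMod 2), ((ω : ZMod p) ^ n) ^ 4 * (ω : ZMod p) ^ i)).2 - (((1 : ZMod 2), ((ω : ZMod p) ^ n) ^ 2 * (ω : ZMod p) ^ i)).2 = (((ω : ZMod p) ^ n) ^ 2 - 1) * (ω : ZMod p) ^ (n * 2 + i)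
        rw [pow_add, pow_mul]
        ring
    have eq2 : (((1 : ZMod 2), ((ω : ZMod p) ^ n) ^ 4 * (ω : ZMod p) ^ i) - ((1 : ZMod 2), (ω : ZMod p) ^ i) : ZMod 2 × ZMod p) = ((0 : ZMod 2), (((ω : ZMod p) ^ n) ^ 2 - 1) * (ω : ZMod p) ^ (n * 1 + i)) := by
      refine Prod.ext ?_ ?_
      · show (1 : ZMod 2) - (1 : ZMod 2) = (0 : ZMod 2)
        decide
      · show (((1 : ZMod 2), ((ω : ZMod p) ^ n) ^ 4 * (ω : ZMod p) ^ i)).2 - (((1 : ZMod 2), (ω : ZMod p) ^ i)).2 = (((ω : ZMod p) ^ n) ^ 2 - 1) * (ω : ZMod p) ^ (n * 1 + i)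
        rw [pow_add, pow_mul]
        linear_combination (((ω : ZMod p) ^ n) - 1) * (ω : ZMod p) ^ i * hε3
    have eq3 : (((1 : ZMod 2), ((ω : ZMod p) ^ n) ^ 4 * (ω : ZMod p) ^ i) - ((0 : ZMod 2), (0 : ZMod p)) : ZMod 2 × ZMod p) = ((1 : ZMod 2), (1 : ZMod p) * (ω : ZMod p) ^ (n * 4 + i)) := by
      refine Prod.ext ?_ ?_
      · show (1 : ZMod 2) - (0 : ZMod 2) = (1 : ZMod 2)
        decide
      · show (((1 : ZMod 2), ((ω : ZMod p) ^ n) ^ 4 * (ω : ZMod p) ^ i)).2 - (((0 : ZMod 2), (0 : ZMod p))).2 = (1 : ZMod p) * (ω : ZMod p) ^ (n * 4 + i)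
        rw [pow_add, pow_mul]
        ring
    have eq4 : (((1 : ZMod 2), ((ω : ZMod p) ^ n) ^ 2 * (ω : ZMod p) ^ i) - ((1 : ZMod 2), (ω : ZMod p) ^ i) : ZMod 2 × ZMod p) = ((0 : ZMod 2), (((ω : ZMod p) ^ n) ^ 2 - 1) * (ω : ZMod p) ^ (n * 0 + i)) := by
      refine Prod.ext ?_ ?_
      · show (1 : ZMod 2) - (1 : ZMod 2) = (0 : ZMod 2)
        decide
      · show (((1 : ZMod 2), ((ω : ZMod p) ^ n) ^ 2 * (ω : ZMod p) ^ i)).2 - (((1 : ZMod 2), (ω : ZMod p) ^ i)).2 = (((ω : ZMod p) ^ n) ^ 2 - 1) * (ω : ZMod p) ^ (n * 0 + i)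
        rw [pow_add, pow_mul]
        ring
    have eq5 : (((1 : ZMod 2), ((ω : ZMod p) ^ n) ^ 2 * (ω : ZMod p) ^ i) - ((0 : ZMod 2), (0 : ZMod p)) : ZMod 2 × ZMod p) = ((1 : ZMod 2), (1 : ZMod p) * (ω : ZMod p) ^ (n * 2 + i)) := by
      refine Prod.ext ?_ ?_
      · show (1 : ZMod 2) - (0 : ZMod 2) = (1 : ZMod 2)
        decide
      · show (((1 : ZMod 2), ((ω : ZMod p) ^ n) ^ 2 * (ω : ZMod p) ^ i)).2 - (((0 : ZMod 2), (0 : ZMod p))).2 = (1 : ZMod p) * (ω : ZMod p) ^ (n * 2 + i)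
        rw [pow_add, pow_mul]
        ring
    have eq6 : (((1 : ZMod 2), ((ω : ZMod p) ^ n) ^ 2 * (ω : ZMod p) ^ i) - ((1 : ZMod 2), ((ω : ZMod p) ^ n) ^ 4 * (ω : ZMod p) ^ i) : ZMod 2 × ZMod p) = ((0 : ZMod 2), (((ω : ZMod p) ^ n) ^ 2 - 1) * (ω : ZMod p) ^ (n * 5 + i)) := by
      refine Prod.ext ?_ ?_
      · show (1 : ZMod 2) - (1 : ZMod 2) = (0 : ZMod 2)
        decide
      · show (((1 : ZMod 2), ((ω : ZMod p) ^ n) ^ 2 * (ω : ZMod p) ^ i)).2 - (((1 : ZMod 2), ((ω : ZMod p) ^ n) ^ 4 * (ω : ZMod p) ^ i)).2 = (((ω : ZMod p) ^ n) ^ 2 - 1) * (ω : ZMod p) ^ (n * 5 + i)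
        rw [pow_add, pow_mul]
        linear_combination (((ω : ZMod p) ^ n) ^ 2 - ((ω : ZMod p) ^ n) ^ 4) * (ω : ZMod p) ^ i * hε3
    have eq7 : (((1 : ZMod 2), (ω : ZMod p) ^ i) - ((1 : ZMod 2), ((ω : ZMod p) ^ n) ^ 2 * (ω : ZMod p) ^ i) : ZMod 2 × ZMod p) = ((0 : ZMod 2), (((ω : ZMod p) ^ n) ^ 2 - 1) * (ω : ZMod p) ^ (n * 3 + i)) := by
      refine Prod.ext ?_ ?_
      · show (1 : ZMod 2) - (1 : ZMod 2) = (0 : ZMod 2)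
        decide
      · show (((1 : ZMod 2), (ω : ZMod p) ^ i)).2 - (((1 : ZMod 2), ((ω : ZMod p) ^ n) ^ 2 * (ω : ZMod p) ^ i)).2 = (((ω : ZMod p) ^ n) ^ 2 - 1) * (ω : ZMod p) ^ (n * 3 + i)
        rw [pow_add, pow_mul]
        linear_combination (1 - ((ω : ZMod p) ^ n) ^ 2) * (ω : ZMod p) ^ i * hε3
    have eq8 : (((1 : ZMod 2), (ω : ZMod p) ^ i) - ((0 : ZMod 2), (0 : ZMod p)) : ZMod 2 × ZMod p) = ((1 : ZMod 2), (1 : ZMod p) * (ω : ZMod p) ^ (n * 0 + i)) := by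
      refine Prod.ext ?_ ?_
      · show (1 : ZMod 2) - (0 : ZMod 2) = (1 : ZMod 2)
        decide
      · show (((1 : ZMod 2), (ω : ZMod p) ^ i)).2 - (((0 : ZMod 2), (0 : ZMod p))).2 = (1 : ZMod p) * (ω : ZMod p) ^ (n * 0 + i)
        rw [pow_add, pow_mul]
        ring
    have eq9 : (((1 : ZMod 2), (ω : ZMod p) ^ i) - ((1 : ZMod 2), ((ω : ZMod p) ^ n) ^ 4 * (ω : ZMod p) ^ i) : ZMod 2 × ZMod p) = ((0 : ZMod 2), (((ω : ZMod p) ^ n) ^ 2 - 1) * (ω : ZMod p) ^ (n * 4 + i)) := by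
      refine Prod.ext ?_ ?_
      · show (1 : ZMod 2) - (1 : ZMod 2) = (0 : ZMod 2)
        decide
      · show (((1 : ZMod 2), (ω : ZMod p) ^ i)).2 - (((1 : ZMod 2), ((ω : ZMod p) ^ n) ^ 4 * (ω : ZMod p) ^ i)).2 = (((ω : ZMod p) ^ n) ^ 2 - 1) * (ω : ZMod p) ^ (n * 4 + i)
        rw [pow_add, pow_mul]
        linear_combination (1 - ((ω : ZMod p) ^ n) ^ 3) * (ω : ZMod p) ^ i * hε3
    have eq10 : (((0 : ZMod 2), (0 : ZMod p)) - ((1 : ZMod 2), ((ω : ZMod p) ^ n) ^ 2 * (ω : ZMod p) ^ i) : ZMod 2 × ZMod p) = ((1 : ZMod 2), (1 : ZMod p) * (ω : ZMod p) ^ (n * 5 + i)) := by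
      refine Prod.ext ?_ ?_
      · show (0 : ZMod 2) - (1 : ZMod 2) = (1 : ZMod 2)
        decide
      · show (((0 : ZMod 2), (0 : ZMod p))).2 - (((1 : ZMod 2), ((ω : ZMod p) ^ n) ^ 2 * (ω : ZMod p) ^ i)).2 = (1 : ZMod p) * (ω : ZMod p) ^ (n * 5 + i)
        rw [pow_add, pow_mul]
        linear_combination -((ω : ZMod p) ^ n) ^ 2 * (ω : ZMod p) ^ i * hε3
    have eq11 : (((0 : ZMod 2), (0 : ZMod p)) - ((1 : ZMod 2), (ω : ZMod p) ^ i) : ZMod 2 × ZMod p) = ((1 : ZMod 2), (1 : ZMod p) * (ω : ZMod p) ^ (n * 3 + i)) := by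
      refine Prod.ext ?_ ?_
      · show (0 : ZMod 2) - (1 : ZMod 2) = (1 : ZMod 2)
        decide
      · show (((0 : ZMod 2), (0 : ZMod p))).2 - (((1 : ZMod 2), (ω : ZMod p) ^ i)).2 = (1 : ZMod p) * (ω : ZMod p) ^ (n * 3 + i)
        rw [pow_add, pow_mul]
        linear_combination -(ω : ZMod p) ^ i * hε3
    have eq12 : (((0 : ZMod 2), (0 : ZMod p)) - ((1 : ZMod 2), ((ω : ZMod p) ^ n) ^ 4 * (ω : ZMod p) ^ i) : ZMod 2 × ZMod p) = ((1 : ZMod 2), (1 : ZMod p) * (ω : ZMod p) ^ (n * 1 + i)) := by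
      refine Prod.ext ?_ ?_
      · show (0 : ZMod 2) - (1 : ZMod 2) = (1 : ZMod 2)
        decide
      · show (((0 : ZMod 2), (0 : ZMod p))).2 - (((1 : ZMod 2), ((ω : ZMod p) ^ n) ^ 4 * (ω : ZMod p) ^ i)).2 = (1 : ZMod p) * (ω : ZMod p) ^ (n * 1 + i)
        rw [pow_add, pow_mul]
        linear_combination -((ω : ZMod p) ^ n) * (ω : ZMod p) ^ i * hε3
    rw [eq1, eq2, eq3, eq4, eq5, eq6, eq7, eq8, eq9, eq10, eq11, eq12]
  have hconv : ∀ f : ℕ → ℕ, ((Multiset.range n).map f).sum = ∑ i ∈ Finset.range n, f i :=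
    fun f => rfl
  have hz1 : ∀ k : ℕ, (0 : ZMod p) ≠ (ω : ZMod p) ^ k := fun k => (hXne k).symm
  have hz2 : ∀ k : ℕ, (0 : ZMod p) ≠ (((ω : ZMod p) ^ n) ^ 2 - 1) * (ω : ZMod p) ^ k :=
    fun k h => (mul_ne_zero hδ (hXne k)) h.symm
  have hDF : IsDF ((⊤ : AddSubgroup (ZMod 2)).prod (⊥ : AddSubgroup (ZMod p))) 4
      ((Multiset.range n).map fun i =>
        ({((0 : ZMod 2), (0 : ZMod p)),
          ((1 : ZMod 2), ((ω : ZMod p)) ^ i),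
          ((1 : ZMod 2), ((ω : ZMod p) ^ n) ^ 2 * ((ω : ZMod p)) ^ i),
          ((1 : ZMod 2), ((ω : ZMod p) ^ n) ^ 4 * ((ω : ZMod p)) ^ i)} :
            Finset (ZMod 2 × ZMod p))) := by
    refine ⟨?_, ?_, ?_⟩
    · intro F hF
      obtain ⟨i, hi, rfl⟩ := Multiset.mem_map.mp hF
      rw [Finset.card_insert_of_notMem (by simp [Prod.ext_iff]),
        Finset.card_insert_of_notMem (by simp [hne1 i, hne2 i]),
        Finset.card_insert_of_notMem (by simp [hne3 i]),
        Finset.card_singleton]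
    · rintro ⟨c, y⟩ hx
      have hy : y = 0 := by simpa [AddSubgroup.mem_prod] using hx
      subst hy
      rw [Multiset.bind_map, Multiset.count_bind, hconv]
      refine Finset.sum_eq_zero fun i _ => ?_
      rw [hBC i, Multiset.count_eq_zero]
      simp [Prod.mk.injEq, hz1, hz2]
    · rintro ⟨c, y⟩ hx
      have hy : y ≠ 0 := by simpa [AddSubgroup.mem_prod] using hx
      rw [Multiset.bind_map, Multiset.count_bind, hconv]
      rcases (show ∀ z : ZMod 2, z = 0 ∨ z = 1 by decide) c with rfl | rfl
      · rw [← key_count p n hn ω hordω hω (((ω : ZMod p) ^ n) ^ 2 - 1) y hδ hy]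
        refine Finset.sum_congr rfl fun i _ => ?_
        rw [hBC i, Finset.sum_range_succ, Finset.sum_range_succ, Finset.sum_range_succ,
          Finset.sum_range_succ, Finset.sum_range_succ, Finset.sum_range_succ,
          Finset.sum_range_zero]
        simp only [Multiset.insert_eq_cons, Multiset.count_cons, Multiset.count_singleton,
          Prod.mk.injEq, zero_ne_one, false_and, if_false, true_and, zero_add, add_zero,
          Multiset.count_zero, if_congr, eq_self_iff_true]
        split_ifs <;> omega
      · rw [← key_count p n hn ω hordω hω 1 y one_ne_zero hy]
        refine Finset.sum_congr rfl fun i _ => ?_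
        rw [hBC i, Finset.sum_range_succ, Finset.sum_range_succ, Finset.sum_range_succ,
          Finset.sum_range_succ, Finset.sum_range_succ, Finset.sum_range_succ,
          Finset.sum_range_zero]
        simp only [Multiset.insert_eq_cons, Multiset.count_cons, Multiset.count_singleton,
          Prod.mk.injEq, one_ne_zero, false_and, if_false, true_and, zero_add, add_zero,
          Multiset.count_zero, eq_self_iff_true]
        split_ifs <;> omega
  refine ⟨hDF, ?_⟩
  -- Part 2: transfer to ZMod (p * 2)
  have hodd : p % 2 = 1 := by omega
  have hco : Nat.Coprime p 2 :=
    Nat.Coprime.symm ((Nat.Prime.coprime_iff_not_dvd Nat.prime_two).mpr (by omega))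
  let e1 : ZMod (p * 2) ≃+* ZMod p × ZMod 2 := ZMod.chineseRemainder hco
  let e : (ZMod 2 × ZMod p) ≃+ ZMod (p * 2) :=
    (AddEquiv.prodComm).trans e1.symm.toAddEquiv
  have hq : e1 ((p : ℕ) : ZMod (p * 2)) = ((0 : ZMod p), (1 : ZMod 2)) := by
    have h2' : ((p : ℕ) : ZMod 2) = 1 := by
      rw [← Nat.mod_add_div p 2, hodd]
      push_cast
      simp [show ((2 : ZMod 2)) = 0 from by decide]
    calc e1 ((p : ℕ) : ZMod (p * 2)) = ((p : ℕ) : ZMod p × ZMod 2) := map_natCast e1 p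
      _ = (((p : ℕ) : ZMod p), ((p : ℕ) : ZMod 2)) := rfl
      _ = ((0 : ZMod p), (1 : ZMod 2)) := by rw [ZMod.natCast_self, h2']
  have he10 : e ((1 : ZMod 2), (0 : ZMod p)) = ((p : ℕ) : ZMod (p * 2)) := by
    have h0 : e ((1 : ZMod 2), (0 : ZMod p)) = e1.symm ((0 : ZMod p), (1 : ZMod 2)) := rfl
    rw [h0, ← hq, RingEquiv.symm_apply_apply]
  have hmem : ∀ x : ZMod 2 × ZMod p,
      x ∈ (⊤ : AddSubgroup (ZMod 2)).prod (⊥ : AddSubgroup (ZMod p))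
        ↔ e x ∈ AddSubgroup.zmultiples ((p : ℕ) : ZMod (p * 2)) := by
    rintro ⟨c, z⟩
    simp only [AddSubgroup.mem_prod, AddSubgroup.mem_top, AddSubgroup.mem_bot, true_and]
    constructor
    · rintro rfl
      rcases (show ∀ w : ZMod 2, w = 0 ∨ w = 1 by decide) c with rfl | rfl
      · rw [show ((0 : ZMod 2), (0 : ZMod p)) = (0 : ZMod 2 × ZMod p) from rfl, map_zero]
        exact zero_mem _
      · rw [he10]
        exact AddSubgroup.mem_zmultiples _
    · intro hx
      obtain ⟨k, hk⟩ := AddSubgroup.mem_zmultiples_iff.mp hx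
      have hcz : ((c, z) : ZMod 2 × ZMod p) = k • ((1 : ZMod 2), (0 : ZMod p)) := by
        apply e.injective
        rw [map_zsmul, he10, hk]
      have hz : z = k • (0 : ZMod p) := congrArg Prod.snd hcz
      simpa using hz
  refine ⟨((Multiset.range n).map fun i =>
        ({((0 : ZMod 2), (0 : ZMod p)),
          ((1 : ZMod 2), ((ω : ZMod p)) ^ i),
          ((1 : ZMod 2), ((ω : ZMod p) ^ n) ^ 2 * ((ω : ZMod p)) ^ i),
          ((1 : ZMod 2), ((ω : ZMod p) ^ n) ^ 4 * ((ω : ZMod p)) ^ i)} :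
            Finset (ZMod 2 × ZMod p))).map (Finset.map ⟨e, e.injective⟩), ?_⟩
  exact isDF_map e hmem hDF
end

section
/- There exists a (2g,2,4,1)-CDF for every positive integer g all of whose prime factors are congruent to 1 modulo 6. -/
variable {G : Type*} [AddGroup G] [DecidableEq G]

lemma blockDiffs_empty : blockDiffs (∅ : Finset G) = 0 := by
  simp [blockDiffs]

lemma blockDiffs_insert (a : G) (F : Finset G) (h : a ∉ F) :
    blockDiffs (insert a F) =
      F.val.map (fun x => a - x) + F.val.map (fun x => x - a) + blockDiffs F := by
  classical
  have h1 : ∀ x ∈ F.val, a ≠ x := fun x hx => fun e => h (e ▸ hx)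
  have e1 : Multiset.filter (fun p : G × G => p.1 ≠ p.2) (Multiset.map (Prod.mk a) F.val) =
      Multiset.map (Prod.mk a) F.val := by
    rw [Multiset.filter_eq_self]
    intro x hx
    obtain ⟨y, hy, rfl⟩ := Multiset.mem_map.1 hx
    simpa using h1 y hy
  have e2 : Multiset.filter (fun p : G × G => p.1 ≠ p.2)
        (Multiset.map (fun x => (x, a)) F.val) = Multiset.map (fun x => (x, a)) F.val := by
    rw [Multiset.filter_eq_self]
    intro x hx
    obtain ⟨y, hy, rfl⟩ := Multiset.mem_map.1 hx
    simp only [ne_eq]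
    exact fun e => h1 y hy e.symm
  unfold blockDiffs
  rw [Finset.filter_val, Finset.product_val, Finset.insert_val_of_notMem h,
    Multiset.cons_product, Multiset.product_cons, Multiset.map_cons,
    Multiset.filter_add, Multiset.filter_add,
    Multiset.filter_cons_of_neg _ (by simp), e1, e2,
    Finset.filter_val, Finset.product_val]
  simp only [Multiset.map_add, Multiset.map_map, Function.comp, add_assoc]


lemma orbit_decomp {K : Type*} [CommRing K] [DecidableEq K] (w : K) (hw6 : w ^ 6 = 1)
    (hfree : ∀ k : ℕ, 1 ≤ k → k < 6 → ∀ x : K, (w ^ k - 1) * x = 0 → x = 0) :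
    ∀ T : Finset K, (0 : K) ∉ T → (∀ x ∈ T, w * x ∈ T) →
      ∃ R : Multiset K,
        R.bind (fun r => (Multiset.range 6).map (fun k => r * w ^ k)) = T.val := by
  have hmod : ∀ n, w ^ n = w ^ (n % 6) := by
    intro n
    conv_lhs => rw [← Nat.mod_add_div n 6]
    rw [pow_add, pow_mul, hw6, one_pow, mul_one]
  intro T
  induction T using Finset.strongInduction with
  | _ T ih =>
    intro h0 hcl
    rcases T.eq_empty_or_nonempty with rfl | ⟨x, hx⟩
    · exact ⟨0, by simp⟩
    have hcan : ∀ (y : K) (k : ℕ), y * w ^ k = 0 → y = 0 := by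
      intro y k
      induction k with
      | zero => simpa using id
      | succ n ihn =>
        intro hk
        apply ihn
        have h5 : y * w ^ n = y * w ^ (n + 1) * w ^ 5 := by
          have h6 : y * w ^ n * w ^ 6 = y * w ^ n := by rw [hw6, mul_one]
          calc y * w ^ n = y * w ^ n * w ^ 6 := h6.symm
            _ = y * w ^ (n + 1) * w ^ 5 := by ring
        rw [h5, hk, zero_mul]
    set O : Finset K := (Finset.range 6).image (fun k => x * w ^ k) with hO
    have horb : ∀ k, x * w ^ k ∈ T := by
      intro k
      induction k with
      | zero => simpa using hx
      | succ n ihn =>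
        have h2 : x * w ^ (n + 1) = w * (x * w ^ n) := by ring
        rw [h2]; exact hcl _ ihn
    have hOsub : O ⊆ T := by
      intro y hy
      obtain ⟨k, _, rfl⟩ := Finset.mem_image.1 hy
      exact horb k
    have key : ∀ i j : ℕ, i < j → j < 6 → x * w ^ i ≠ x * w ^ j := by
      intro i j hlt hj hij
      have hpw : w ^ (j - i) * w ^ i = w ^ j := by
        rw [← pow_add]; congr 1; omega
      have hd : (w ^ (j - i) - 1) * (x * w ^ i) = 0 := by
        calc (w ^ (j - i) - 1) * (x * w ^ i)
            = x * (w ^ (j - i) * w ^ i) - x * w ^ i := by ring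
          _ = x * w ^ j - x * w ^ i := by rw [hpw]
          _ = 0 := by rw [← hij]; ring
      have hxi : x * w ^ i = 0 := hfree (j - i) (by omega) (by omega) _ hd
      exact h0 (hcan x i hxi ▸ hx)
    have hinj : Set.InjOn (fun k => x * w ^ k) (Finset.range 6 : Finset ℕ) := by
      intro i hi j hj hij
      simp only [Finset.coe_range, Set.mem_Iio] at hi hj
      simp only at hij
      rcases lt_trichotomy i j with h | h | h
      · exact absurd hij (key i j h hj)
      · exact h
      · exact absurd hij.symm (key j i h hi)
    have hxO : x ∈ O := Finset.mem_image.2 ⟨0, by simp, by simp⟩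
    have hssub : T \ O ⊂ T :=
      (Finset.ssubset_iff_of_subset (Finset.sdiff_subset)).2
        ⟨x, hx, by simp [Finset.mem_sdiff, hxO]⟩
    have hcl' : ∀ y ∈ T \ O, w * y ∈ T \ O := by
      intro y hy
      rw [Finset.mem_sdiff] at hy ⊢
      refine ⟨hcl _ hy.1, fun hmem => hy.2 ?_⟩
      obtain ⟨k, hk, he⟩ := Finset.mem_image.1 hmem
      have hy6 : y = x * w ^ ((k + 5) % 6) := by
        rw [← hmod]
        have : y * w ^ 6 = y := by rw [hw6, mul_one]
        calc y = y * w ^ 6 := this.symm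
          _ = (w * y) * w ^ 5 := by ring
          _ = (x * w ^ k) * w ^ 5 := by rw [he]
          _ = x * w ^ (k + 5) := by rw [pow_add]; ring
      exact Finset.mem_image.2 ⟨(k + 5) % 6, Finset.mem_range.2 (Nat.mod_lt _ (by norm_num)), hy6.symm⟩
    obtain ⟨R', hR'⟩ := ih (T \ O) hssub (by simp [h0]) hcl'
    refine ⟨x ::ₘ R', ?_⟩
    rw [Multiset.cons_bind, hR']
    have hOval : O.val = (Multiset.range 6).map (fun k => x * w ^ k) := by
      rw [hO, Finset.image_val_of_injOn hinj, Finset.range_val]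
    rw [← hOval, Finset.sdiff_val, add_tsub_cancel_of_le (Finset.val_le_iff.2 hOsub)]


lemma sol_prime (p : ℕ) (hp : p.Prime) (h6 : p % 6 = 1) :
    ∃ ω : ℤ, (p : ℤ) ∣ ω ^ 2 - ω + 1 := by
  haveI : Fact p.Prime := ⟨hp⟩
  have hp5 : 5 ≤ p := by
    have := hp.two_le
    omega
  have hdvd6 : 6 ∣ p - 1 := by omega
  obtain ⟨gen, hgen⟩ := IsCyclic.exists_generator (α := (ZMod p)ˣ)
  have hcard : orderOf gen = p - 1 := by
    rw [orderOf_eq_card_of_forall_mem_zpowers hgen, Nat.card_eq_fintype_card, ZMod.card_units]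
  obtain ⟨m, hm⟩ := hdvd6
  have hm0 : 0 < m := by omega
  have hord : orderOf (gen ^ m) = 6 := by
    rw [orderOf_pow, hcard, hm]
    have : (6 * m).gcd m = m := Nat.gcd_eq_right ⟨6, by ring⟩
    rw [this, Nat.mul_div_cancel _ hm0]
  set u := gen ^ m with hu
  set a : ZMod p := ((u : (ZMod p)ˣ) : ZMod p) with ha
  have h6u : u ^ 6 = 1 := by
    rw [← hord]; exact pow_orderOf_eq_one u
  have h3u : u ^ 3 ≠ 1 := by
    intro h
    have := orderOf_dvd_of_pow_eq_one h
    rw [hord] at this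
    omega
  have h2u : u ^ 2 ≠ 1 := by
    intro h
    have := orderOf_dvd_of_pow_eq_one h
    rw [hord] at this
    omega
  have ha6 : a ^ 6 = 1 := by
    rw [ha, ← Units.val_pow_eq_pow_val, h6u, Units.val_one]
  have ha3 : a ^ 3 ≠ 1 := by
    rw [ha, ← Units.val_pow_eq_pow_val]
    exact fun h => h3u (Units.ext h)
  have ha3' : a ^ 3 = -1 := by
    have : (a ^ 3 - 1) * (a ^ 3 + 1) = 0 := by
      have : (a ^ 3 - 1) * (a ^ 3 + 1) = a ^ 6 - 1 := by ring
      rw [this, ha6, sub_self]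
    rcases mul_eq_zero.1 this with h | h
    · exact absurd (by linear_combination h) ha3
    · linear_combination h
  have hane : a ≠ -1 := by
    intro h
    apply h2u
    apply Units.ext
    rw [Units.val_pow_eq_pow_val, ← ha, h]
    simp
  have hquad : a ^ 2 - a + 1 = 0 := by
    have hfac : (a + 1) * (a ^ 2 - a + 1) = 0 := by
      have : (a + 1) * (a ^ 2 - a + 1) = a ^ 3 + 1 := by ring
      rw [this, ha3']; ring
    rcases mul_eq_zero.1 hfac with h | h
    · exact absurd (by linear_combination h) hane
    · exact h
  refine ⟨(a.val : ℤ), ?_⟩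
  rw [← ZMod.intCast_zmod_eq_zero_iff_dvd]
  push_cast
  rw [ZMod.natCast_val, ZMod.cast_id]
  linear_combination hquad

lemma sol_prime_pow (p : ℕ) (hp : p.Prime) (h6 : p % 6 = 1) :
    ∀ e : ℕ, ∃ ω : ℤ, ((p : ℤ) ^ e) ∣ ω ^ 2 - ω + 1 := by
  haveI : Fact p.Prime := ⟨hp⟩
  intro e
  induction e with
  | zero => exact ⟨0, by norm_num⟩
  | succ e ihe =>
    rcases Nat.eq_zero_or_pos e with rfl | he
    · simpa using sol_prime p hp h6
    obtain ⟨ω, hω⟩ := ihe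
    -- p does not divide 2ω - 1
    have hpdvd : ¬ ((p : ℤ) ∣ (2 * ω - 1)) := by
      intro hd
      have h1 : (p : ℤ) ∣ (2 * ω - 1) ^ 2 := dvd_pow hd two_ne_zero
      have h2 : (p : ℤ) ∣ ω ^ 2 - ω + 1 := dvd_trans (dvd_pow_self (p : ℤ) he.ne') hω
      have h3 : (p : ℤ) ∣ 3 := by
        have : (3 : ℤ) = 4 * (ω ^ 2 - ω + 1) - (2 * ω - 1) ^ 2 := by ring
        rw [this]
        exact dvd_sub (h2.mul_left 4) h1
      have := Int.le_of_dvd (by norm_num) h3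
      have hp5 : 5 ≤ p := by have := hp.two_le; omega
      omega
    -- inverse of (2ω-1) mod p
    have hne : ((2 * ω - 1 : ℤ) : ZMod p) ≠ 0 := by
      rw [Ne, ZMod.intCast_zmod_eq_zero_iff_dvd]
      exact hpdvd
    obtain ⟨v, hv⟩ : ∃ v : ZMod p, ((2 * ω - 1 : ℤ) : ZMod p) * v = 1 :=
      ⟨(((2 * ω - 1 : ℤ) : ZMod p))⁻¹, ZMod.mul_inv_of_unit _ (Ne.isUnit hne)⟩
    set u : ℤ := (v.val : ℤ) with hu
    have hmodp : (p : ℤ) ∣ (2 * ω - 1) * u - 1 := by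
      rw [← ZMod.intCast_zmod_eq_zero_iff_dvd]
      push_cast at hv
      simp only [hu]
      push_cast
      rw [ZMod.natCast_val, ZMod.cast_id]
      linear_combination hv
    refine ⟨ω - (ω ^ 2 - ω + 1) * u, ?_⟩
    have hexp : (ω - (ω ^ 2 - ω + 1) * u) ^ 2 - (ω - (ω ^ 2 - ω + 1) * u) + 1
        = (ω ^ 2 - ω + 1) * (1 - (2 * ω - 1) * u) + ((ω ^ 2 - ω + 1) * u) ^ 2 := by
      ring
    rw [hexp, pow_succ]
    apply dvd_add
    · have : (p:ℤ)^e * (p:ℤ) ∣ (ω ^ 2 - ω + 1) * ((2 * ω - 1) * u - 1) :=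
        mul_dvd_mul hω hmodp
      have h2 : (ω ^ 2 - ω + 1) * (1 - (2 * ω - 1) * u) = -((ω ^ 2 - ω + 1) * ((2 * ω - 1) * u - 1)) := by ring
      rw [h2]
      exact this.neg_right
    · have : (p:ℤ)^e * (p:ℤ)^e ∣ (ω ^ 2 - ω + 1) * (ω ^ 2 - ω + 1) := mul_dvd_mul hω hω
      have h2 : ((ω ^ 2 - ω + 1) * u) ^ 2 = (ω ^ 2 - ω + 1) * (ω ^ 2 - ω + 1) * u ^ 2 := by ring
      rw [h2]
      have hA : (p:ℤ)^e * (p:ℤ) ∣ (ω ^ 2 - ω + 1) * (ω ^ 2 - ω + 1) :=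
        dvd_trans (mul_dvd_mul_left _ (dvd_pow_self _ he.ne')) this
      exact hA.mul_right (u ^ 2)

lemma sol_combine (m n : ℕ) (hco : Nat.Coprime m n)
    (h1 : ∃ ω : ℤ, (m : ℤ) ∣ ω ^ 2 - ω + 1) (h2 : ∃ ω : ℤ, (n : ℤ) ∣ ω ^ 2 - ω + 1) :
    ∃ ω : ℤ, ((m * n : ℕ) : ℤ) ∣ ω ^ 2 - ω + 1 := by
  obtain ⟨ω₁, hω₁⟩ := h1
  obtain ⟨ω₂, hω₂⟩ := h2
  have hico : IsCoprime (m : ℤ) (n : ℤ) := Int.isCoprime_iff_gcd_eq_one.2 (by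
    rwa [Int.gcd_natCast_natCast])
  obtain ⟨a, b, hab⟩ := hico
  set x : ℤ := ω₂ * (a * m) + ω₁ * (b * n) with hx
  have key : ∀ (M : ℤ) (ω : ℤ), M ∣ ω ^ 2 - ω + 1 → M ∣ x - ω → M ∣ x ^ 2 - x + 1 := by
    intro M ω hω hxω
    have : x ^ 2 - x + 1 = (ω ^ 2 - ω + 1) + (x - ω) * (x + ω - 1) := by ring
    rw [this]
    exact dvd_add hω (hxω.mul_right _)
  have hm : (m : ℤ) ∣ x - ω₁ := by
    have : x - ω₁ = ω₂ * (a * m) + ω₁ * (b * n) - ω₁ * (a * m + b * n) := by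
      rw [hab]; ring
    rw [this]
    have : ω₂ * (a * m) + ω₁ * (b * n) - ω₁ * (a * m + b * n) = (m : ℤ) * (ω₂ * a - ω₁ * a) := by ring
    rw [this]
    exact Dvd.intro _ rfl
  have hn : (n : ℤ) ∣ x - ω₂ := by
    have : x - ω₂ = (n : ℤ) * (ω₁ * b - ω₂ * b) := by
      have h1 : a * m = 1 - b * n := by linarith [hab]
      rw [hx, h1]; ring
    rw [this]
    exact Dvd.intro _ rfl
  refine ⟨x, ?_⟩
  push_cast
  exact IsCoprime.mul_dvd ⟨a, b, hab⟩ (key _ _ hω₁ hm) (key _ _ hω₂ hn)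

lemma exists_sol : ∀ g : ℕ, 0 < g → (∀ p : ℕ, p.Prime → p ∣ g → p % 6 = 1) →
    ∃ ω : ℤ, (g : ℤ) ∣ ω ^ 2 - ω + 1 := by
  intro g
  induction g using Nat.strong_induction_on with
  | _ g ih =>
    intro hg hp
    rcases eq_or_lt_of_le (show 1 ≤ g from hg) with h1 | h1
    · exact ⟨0, by rw [← h1]; norm_num⟩
    -- g ≥ 2
    have hg1 : g ≠ 1 := by omega
    set p := g.minFac with hpdef
    have hpp : p.Prime := Nat.minFac_prime hg1
    have hpd : p ∣ g := Nat.minFac_dvd g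
    have hp6 : p % 6 = 1 := hp p hpp hpd
    set e := g.factorization p with he
    set m := g / p ^ e with hm
    have hgm : p ^ e * m = g := Nat.ordProj_mul_ordCompl_eq_self g p
    have he1 : 0 < e := (hpp.factorization_pos_of_dvd hg.ne' hpd)
    have hco : Nat.Coprime p m := Nat.coprime_ordCompl hpp hg.ne'
    have hcopm : Nat.Coprime (p ^ e) m := hco.pow_left e
    have hm0 : 0 < m := by
      rcases Nat.eq_zero_or_pos m with h | h
      · rw [h, mul_zero] at hgm; omega
      · exact h
    have hmlt : m < g := by
      have hpe : 1 < p ^ e := by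
        calc 1 < p := hpp.one_lt
        _ ≤ p ^ e := Nat.le_self_pow he1.ne' p
      calc m = 1 * m := (one_mul m).symm
      _ < p ^ e * m := by exact (Nat.mul_lt_mul_right hm0).2 hpe
      _ = g := hgm
    have hmsol := ih m hmlt hm0 (fun q hq hqd => hp q hq (hqd.trans (Nat.ordCompl_dvd g p)))
    have hpsol := sol_prime_pow p hpp hp6 e
    have hpsol' : ∃ ω : ℤ, ((p ^ e : ℕ) : ℤ) ∣ ω ^ 2 - ω + 1 := by
      obtain ⟨ω, hω⟩ := hpsol
      exact ⟨ω, by push_cast; exact hω⟩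
    obtain ⟨ω, hω⟩ := sol_combine (p ^ e) m hcopm hpsol' hmsol
    rw [hgm] at hω
    exact ⟨ω, hω⟩

section Main


/-- A `(2g,2,4,1)`-CDF exists for every positive integer `g` all of whose
prime factors are congruent to `1` modulo `6`. -/
theorem stmt_5 (g : ℕ) (hg : 0 < g) (hp : ∀ p : ℕ, p.Prime → p ∣ g → p % 6 = 1) :
    ∃ 𝓕 : Multiset (Finset (ZMod (g * 2))), IsCDF g 2 4 𝓕 := by
  haveI : NeZero g := ⟨hg.ne'⟩
  classical
  have h2 : ¬ (2 ∣ g) := fun h => by have := hp 2 Nat.prime_two h; omega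
  have h3 : ¬ (3 ∣ g) := fun h => by have := hp 3 Nat.prime_three h; omega
  have hco : Nat.Coprime g 2 := Nat.coprime_comm.mp ((Nat.prime_two.coprime_iff_not_dvd).2 h2)
  have hco2 : Nat.Coprime 2 g := (Nat.prime_two.coprime_iff_not_dvd).2 h2
  have hco3 : Nat.Coprime 3 g := (Nat.prime_three.coprime_iff_not_dvd).2 h3
  obtain ⟨ω, hω⟩ := exists_sol g hg hp
  set w : ZMod g := (ω : ZMod g) with hwdef
  have hquad : w * w - w + 1 = 0 := by
    have h0 : ((ω ^ 2 - ω + 1 : ℤ) : ZMod g) = 0 := by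
      rw [ZMod.intCast_zmod_eq_zero_iff_dvd]; exact hω
    push_cast at h0
    linear_combination h0
  have hww : w * w = w - 1 := by linear_combination hquad
  obtain ⟨u2, hu2⟩ := (ZMod.isUnit_iff_coprime 2 g).2 hco2
  obtain ⟨u3, hu3⟩ := (ZMod.isUnit_iff_coprime 3 g).2 hco3
  set v2 : ZMod g := ((u2⁻¹ : (ZMod g)ˣ) : ZMod g) with hv2def
  set v3 : ZMod g := ((u3⁻¹ : (ZMod g)ˣ) : ZMod g) with hv3def
  have hv2 : (2 : ZMod g) * v2 = 1 := by
    have := u2.mul_inv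
    rw [hu2] at this
    rw [hv2def]
    rw [show ((2:ℕ) : ZMod g) = (2 : ZMod g) by push_cast; ring] at this
    exact this
  have hv3 : (3 : ZMod g) * v3 = 1 := by
    have := u3.mul_inv
    rw [hu3] at this
    rw [hv3def]
    rw [show ((3:ℕ) : ZMod g) = (3 : ZMod g) by push_cast; ring] at this
    exact this
  set t : ZMod g := (1 + w) * v3 with htdef
  have ht : (2 - w) * t = 1 := by
    rw [htdef]; linear_combination hv3 - v3 * hww
  have hw3 : w * w * w = -1 := by linear_combination (w + 1) * hquad
  have hw6 : w ^ 6 = 1 := by linear_combination (w^3 - 1) * hw3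
  have hfree : ∀ k : ℕ, 1 ≤ k → k < 6 → ∀ x : ZMod g, (w ^ k - 1) * x = 0 → x = 0 := by
    intro k hk1 hk6 x h
    interval_cases k
    · linear_combination (-w) * h + x * hquad
    · linear_combination (-t) * h + (t*x) * hquad + (-x) * ht
    · linear_combination (-v2) * h + (v2*(w+1)*x) * hquad + (-x) * hv2
    · linear_combination (-(2-w)*v3) * h + (v3*x + (2-w)*w*(w+1)*v3*x) * hquad + (-x) * hv3
    · linear_combination (w-1) * h + (-(x*(w^4-w^2-w))) * hquad
  -- T and orbit decomposition
  set T : Finset (ZMod g) := Finset.univ.filter (fun x => x ≠ 0) with hTdef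
  have hmemT : ∀ x : ZMod g, x ∈ T ↔ x ≠ 0 := by
    intro x; rw [hTdef]; simp
  have hT0 : (0 : ZMod g) ∉ T := fun h => ((hmemT 0).1 h) rfl
  have hTcl : ∀ x ∈ T, w * x ∈ T := by
    intro x hx
    rw [hmemT] at hx ⊢
    intro h
    apply hx
    linear_combination (1 - w) * h + x * hquad
  obtain ⟨R, hR⟩ := orbit_decomp w hw6 hfree T hT0 hTcl
  have hmemR : ∀ r ∈ R, r ≠ 0 := by
    intro r hr
    have hrT : r ∈ T := by
      rw [Finset.mem_def, ← hR]
      refine Multiset.mem_bind.2 ⟨r, hr, Multiset.mem_map.2 ⟨0, ?_, by simp⟩⟩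
      simp
    exact (hmemT r).1 hrT
  have hmapT : T.val.map (fun z => z * t) = T.val := by
    have hinj : Set.InjOn (fun z => z * t) (T : Set (ZMod g)) := by
      intro a _ b _ hab
      simp only at hab
      linear_combination (2 - w) * hab + (-(a - b)) * ht
    rw [Finset.image_val_of_injOn hinj |>.symm]
    congr 1
    ext y
    simp only [Finset.mem_image, hmemT]
    constructor
    · rintro ⟨a, ha, rfl⟩
      intro h0
      exact ha (by linear_combination (2 - w) * h0 + (-a) * ht)
    · intro hy
      refine ⟨y * (2 - w), ?_, by linear_combination y * ht⟩
      intro h0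
      exact hy (by linear_combination t * h0 + (-y) * ht)
  -- CRT
  set e := ZMod.chineseRemainder hco with hedef
  set ψ : ZMod g × ZMod 2 → ZMod (g * 2) := fun p => e.symm p with hψdef
  have hψinj : Function.Injective ψ := e.symm.injective
  have hψsub : ∀ a b : ZMod g × ZMod 2, ψ a - ψ b = ψ (a - b) := fun a b =>
    (map_sub e.symm a b).symm
  have hz01 : ((0 : ZMod 2) - 1) = 1 := by decide
  have hone0 : (0 : ZMod 2) ≠ 1 := by decide
  -- blocks
  set blockF : ZMod g → Finset (ZMod (g * 2)) := fun r =>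
    insert (ψ (0, 0)) (insert (ψ (r, 0)) (insert (ψ (r * w, 0)) {ψ (r * t, 1)})) with hblockdef
  -- distinctness facts for r ≠ 0
  have hrw0 : ∀ r : ZMod g, r ≠ 0 → r * w ≠ 0 := by
    intro r hr h
    exact hr (by linear_combination (1 - w) * h + r * hquad)
  have hrt0 : ∀ r : ZMod g, r ≠ 0 → r * t ≠ 0 := by
    intro r hr h
    exact hr (by linear_combination (2 - w) * h + (-r) * ht)
  have hrrw : ∀ r : ZMod g, r ≠ 0 → r ≠ r * w := by
    intro r hr h
    refine hr (hfree 1 le_rfl (by norm_num) r ?_)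
    linear_combination (-1) * h
  have hnm3 : ∀ r : ZMod g, r ≠ 0 → ψ (r * w, 0) ∉ ({ψ (r * t, 1)} : Finset (ZMod (g*2))) := by
    intro r hr h
    rw [Finset.mem_singleton] at h
    have := hψinj h
    exact hone0 (congrArg Prod.snd this)
  have hnm2 : ∀ r : ZMod g, r ≠ 0 →
      ψ (r, 0) ∉ insert (ψ (r * w, 0)) ({ψ (r * t, 1)} : Finset (ZMod (g*2))) := by
    intro r hr h
    rcases Finset.mem_insert.1 h with h | h
    · exact hrrw r hr (congrArg Prod.fst (hψinj h))
    · rw [Finset.mem_singleton] at h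
      exact hone0 (congrArg Prod.snd (hψinj h))
  have hnm1 : ∀ r : ZMod g, r ≠ 0 →
      ψ (0, 0) ∉ insert (ψ (r, 0)) (insert (ψ (r * w, 0)) ({ψ (r * t, 1)} : Finset (ZMod (g*2)))) := by
    intro r hr h
    rcases Finset.mem_insert.1 h with h | h
    · exact hr (congrArg Prod.fst (hψinj h)).symm
    · rcases Finset.mem_insert.1 h with h | h
      · exact hrw0 r hr (congrArg Prod.fst (hψinj h)).symm
      · rw [Finset.mem_singleton] at h
        exact hone0 (congrArg Prod.snd (hψinj h))
  have hcard : ∀ r : ZMod g, r ≠ 0 → (blockF r).card = 4 := by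
    intro r hr
    rw [hblockdef]
    rw [Finset.card_insert_of_notMem (hnm1 r hr),
      Finset.card_insert_of_notMem (hnm2 r hr),
      Finset.card_insert_of_notMem (hnm3 r hr),
      Finset.card_singleton]
  -- the difference multiset of a block
  have hblock : ∀ r : ZMod g, r ≠ 0 →
      blockDiffs (blockF r) =
        (Multiset.range 6).map (fun k => ψ (r * w ^ k, 0)) +
        (Multiset.range 6).map (fun k => ψ (r * t * w ^ k, 1)) := by
    intro r hr
    have eA1 : -r = r * w ^ 3 := by linear_combination (-(r*(w+1))) * hquad
    have eA2 : -(r * w) = r * w ^ 4 := by linear_combination (-(r*w*(w+1))) * hquad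
    have eA3 : -(r * t) = r * t * w ^ 3 := by linear_combination (-(r*t*(w+1))) * hquad
    have eB1 : r - r * w = r * w ^ 5 := by linear_combination (r*(1 - w^3 - w^2)) * hquad
    have eB2 : r - r * t = r * t * w ^ 5 := by
      linear_combination (r*t - r*t*w^2*(w+1)) * hquad + (-r) * ht
    have eB3 : r * w - r = r * w ^ 2 := by linear_combination (-r) * hquad
    have eB4 : r * t - r = r * t * w ^ 2 := by linear_combination (-(r*t)) * hquad + r * ht
    have eC1 : r * w - r * t = r * t * w := by
      linear_combination (-(r*t)) * hquad + (-(r*w)) * ht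
    have eC2 : r * t - r * w = r * t * w ^ 4 := by
      linear_combination (r*t - r*t*w*(w+1)) * hquad + (r*w) * ht
    have hrange : (Multiset.range 6) = (0 ::ₘ 1 ::ₘ 2 ::ₘ 3 ::ₘ 4 ::ₘ 5 ::ₘ 0) := by decide
    rw [hblockdef]
    rw [blockDiffs_insert _ _ (hnm1 r hr), blockDiffs_insert _ _ (hnm2 r hr),
      blockDiffs_insert _ _ (hnm3 r hr)]
    rw [show blockDiffs ({ψ (r * t, 1)} : Finset (ZMod (g*2))) = 0 by
      simp [blockDiffs, Finset.singleton_product_singleton, Finset.filter_singleton]]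
    rw [Finset.insert_val_of_notMem (hnm2 r hr), Finset.insert_val_of_notMem (hnm3 r hr),
      Finset.singleton_val, hrange]
    simp only [Multiset.map_cons, Multiset.map_singleton, Multiset.map_zero]
    simp only [hψsub, Prod.mk_sub_mk, sub_zero, zero_sub, sub_self, hz01]
    rw [eA1, eA2, eA3, eB1, eB2, eB3, eB4, eC1, eC2]
    simp only [pow_zero, pow_one, mul_one]
    apply Multiset.ext.2
    intro a
    simp only [Multiset.count_add, Multiset.count_cons, Multiset.count_singleton,
      Multiset.count_zero]
    ring
  -- total difference multiset
  set 𝓕 : Multiset (Finset (ZMod (g * 2))) := R.map blockF with hFd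
  have hDtot : 𝓕.bind blockDiffs =
      T.val.map (fun z => ψ (z, 0)) + T.val.map (fun z => ψ (z, 1)) := by
    rw [hFd, Multiset.bind_map]
    rw [Multiset.bind_congr (fun r hr => hblock r (hmemR r hr))]
    rw [Multiset.bind_add]
    congr 1
    · have hzero : ∀ r : ZMod g, (Multiset.range 6).map (fun k => ψ (r * w ^ k, 0)) =
          ((Multiset.range 6).map (fun k => r * w ^ k)).map (fun z => ψ (z, 0)) := by
        intro r
        rw [Multiset.map_map]
        rfl
      rw [Multiset.bind_congr (fun r _ => hzero r), ← Multiset.map_bind, hR]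
    · have hone : ∀ r : ZMod g, (Multiset.range 6).map (fun k => ψ (r * t * w ^ k, 1)) =
          ((Multiset.range 6).map (fun k => r * w ^ k)).map (fun z => ψ (z * t, 1)) := by
        intro r
        rw [Multiset.map_map]
        apply Multiset.map_congr rfl
        intro k _
        simp only [Function.comp]
        have hc : r * t * w ^ k = r * w ^ k * t := by ring
        rw [hc]
      rw [Multiset.bind_congr (fun r _ => hone r), ← Multiset.map_bind, hR]
      rw [show (fun z => ψ (z * t, (1 : ZMod 2))) = (fun z => ψ (z, 1)) ∘ (fun z => z * t)
        from rfl]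
      rw [← Multiset.map_map, hmapT]
  -- membership in H
  have hcases : ∀ c : ZMod 2, c = 0 ∨ c = 1 := by decide
  have heg : e ((g : ZMod (g * 2))) = ((0 : ZMod g), (1 : ZMod 2)) := by
    have h1 : e ((g : ℕ) : ZMod (g * 2)) = (((g : ℕ) : ZMod g), ((g : ℕ) : ZMod 2)) := by
      rw [map_natCast]
      constructor
    rw [h1]
    have hg2 : g % 2 = 1 := by omega
    have : ((g : ℕ) : ZMod 2) = 1 := by
      rw [← ZMod.natCast_mod, hg2, Nat.cast_one]
    rw [this, ZMod.natCast_self]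
  have hH : ∀ x : ZMod (g * 2), x ∈ AddSubgroup.zmultiples ((g : ZMod (g * 2))) ↔
      (e x).1 = 0 := by
    intro x
    constructor
    · intro hx
      obtain ⟨k, hk⟩ := AddSubgroup.mem_zmultiples_iff.1 hx
      have h4 : e x = k • e ((g : ZMod (g * 2))) := by rw [← hk, map_zsmul]
      rw [heg] at h4
      have h5 := congrArg Prod.fst h4
      simpa using h5
    · intro h1
      rcases hcases (e x).2 with h | h
      · have hx0 : e x = 0 := by
          have h6 : e x = ((e x).1, (e x).2) := rfl
          rw [h6, h1, h]
          rfl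
        have h7 : x = 0 := by
          apply e.injective
          rw [hx0, map_zero]
        rw [h7]
        exact zero_mem _
      · have hxg : e x = e ((g : ZMod (g * 2))) := by
          rw [heg]
          have h6 : e x = ((e x).1, (e x).2) := rfl
          rw [h6, h1, h]
        have h7 : x = ((g : ZMod (g * 2))) := e.injective hxg
        rw [h7]
        exact AddSubgroup.mem_zmultiples _
  -- counting helper
  have hcount : ∀ (x1 : ZMod g) (x2 c : ZMod 2),
      Multiset.count (ψ (x1, x2)) (T.val.map (fun z => ψ (z, c))) =
        if x2 = c then Multiset.count x1 T.val else 0 := by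
    intro x1 x2 c
    by_cases h : x2 = c
    · subst h
      rw [if_pos rfl]
      exact Multiset.count_map_eq_count' _ _
        (fun a b hab => congrArg Prod.fst (hψinj hab)) x1
    · rw [if_neg h]
      apply Multiset.count_eq_zero_of_notMem
      intro hm
      obtain ⟨z, hz, hzeq⟩ := Multiset.mem_map.1 hm
      exact h (congrArg Prod.snd (hψinj hzeq)).symm
  have hxψ : ∀ x : ZMod (g * 2), x = ψ ((e x).1, (e x).2) := fun x =>
    (e.symm_apply_apply x).symm
  refine ⟨𝓕, ?_, ?_, ?_⟩
  · intro F hF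
    obtain ⟨r, hrR, rfl⟩ := Multiset.mem_map.1 hF
    exact hcard r (hmemR r hrR)
  · intro x hx
    have h1 : (e x).1 = 0 := (hH x).1 hx
    rw [hDtot, Multiset.count_add]
    have hc0 := hcount (e x).1 (e x).2 0
    have hc1 := hcount (e x).1 (e x).2 1
    rw [← hxψ x] at hc0 hc1
    rw [hc0, hc1, h1]
    have hcnt0 : Multiset.count (0 : ZMod g) T.val = 0 :=
      Multiset.count_eq_zero_of_notMem (fun hmem => hT0 (Finset.mem_def.2 hmem))
    rw [hcnt0]
    simp
  · intro x hx
    have h1 : (e x).1 ≠ 0 := fun h => hx ((hH x).2 h)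
    rw [hDtot, Multiset.count_add]
    have hc0 := hcount (e x).1 (e x).2 0
    have hc1 := hcount (e x).1 (e x).2 1
    rw [← hxψ x] at hc0 hc1
    rw [hc0, hc1]
    have hmem : (e x).1 ∈ T.val := Finset.mem_def.1 ((hmemT _).2 h1)
    have hcnt1 : Multiset.count ((e x).1) T.val = 1 :=
      Multiset.count_eq_one_of_mem T.nodup hmem
    rw [hcnt1]
    rcases hcases (e x).2 with h | h <;> rw [h] <;> decide
end Main
end

section
/- There exists a (2g,2,4,1)-CDF for every integer g with g ≡ 1 (mod 6) and 7 ≤ g ≤ 103. -/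
lemma mem_zmul_iff (g : ℕ) (x : ZMod (g * 2)) :
    x ∈ AddSubgroup.zmultiples ((g : ZMod (g * 2))) ↔ x = 0 ∨ x = (g : ZMod (g * 2)) := by
  constructor
  · rintro ⟨k, rfl⟩
    have h2 : (2 : ℤ) • (g : ZMod (g * 2)) = 0 := by
      have h0 : ((g * 2 : ℕ) : ZMod (g * 2)) = 0 := ZMod.natCast_self _
      push_cast at h0
      rw [two_zsmul]
      linear_combination h0
    rcases Int.even_or_odd k with ⟨m, hm⟩ | ⟨m, hm⟩ <;> subst hm
    · left
      show (m + m) • (g : ZMod (g * 2)) = 0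
      rw [← two_mul, mul_comm (2 : ℤ) m, mul_smul, h2, smul_zero]
    · right
      show (2 * m + 1) • (g : ZMod (g * 2)) = (g : ZMod (g * 2))
      rw [add_zsmul, mul_comm (2 : ℤ) m, mul_smul, h2, smul_zero, zero_add, one_zsmul]
  · rintro (rfl | rfl)
    · exact ⟨0, by simp⟩
    · exact ⟨1, one_zsmul _⟩

lemma isCDF_helper (g : ℕ) (𝓕 : Multiset (Finset (ZMod (g * 2))))
    (h1 : ∀ F ∈ 𝓕, F.card = 4)
    (h2 : (𝓕.bind blockDiffs).count 0 = 0)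
    (h3 : (𝓕.bind blockDiffs).count ((g : ZMod (g * 2))) = 0)
    (h4 : ∀ x : ZMod (g * 2), x ≠ 0 → x ≠ (g : ZMod (g * 2)) →
      (𝓕.bind blockDiffs).count x = 1) :
    IsCDF g 2 4 𝓕 := by
  refine ⟨h1, ?_, ?_⟩
  · intro x hx
    rcases (mem_zmul_iff g x).mp hx with rfl | rfl
    · exact h2
    · exact h3
  · intro x hx
    rw [mem_zmul_iff] at hx
    push_neg at hx
    exact h4 x hx.1 hx.2

set_option maxRecDepth 4000 in
set_option maxHeartbeats 2000000 in
lemma cdf_7 : ∃ 𝓕 : Multiset (Finset (ZMod (7 * 2))), IsCDF 7 2 4 𝓕 :=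
  ⟨({{0,1,11,9}} : Multiset (Finset (ZMod (7 * 2)))),
    isCDF_helper 7 _ (by intro F hF; fin_cases hF <;> rfl) (by decide) (by decide) (by decide)⟩

set_option maxRecDepth 4000 in
set_option maxHeartbeats 2000000 in
lemma cdf_13 : ∃ 𝓕 : Multiset (Finset (ZMod (13 * 2))), IsCDF 13 2 4 𝓕 :=
  ⟨({{0,1,18,24}, {0,4,14,19}} : Multiset (Finset (ZMod (13 * 2)))),
    isCDF_helper 13 _ (by intro F hF; fin_cases hF <;> rfl) (by decide) (by decide) (by decide)⟩

set_option maxRecDepth 4000 in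
set_option maxHeartbeats 2000000 in
lemma cdf_19 : ∃ 𝓕 : Multiset (Finset (ZMod (19 * 2))), IsCDF 19 2 4 𝓕 :=
  ⟨({{0,1,3,29}, {0,4,15,20}, {0,6,31,14}} : Multiset (Finset (ZMod (19 * 2)))),
    isCDF_helper 19 _ (by intro F hF; fin_cases hF <;> rfl) (by decide) (by decide) (by decide)⟩

set_option maxRecDepth 4000 in
set_option maxHeartbeats 2000000 in
lemma cdf_25 : ∃ 𝓕 : Multiset (Finset (ZMod (25 * 2))), IsCDF 25 2 4 𝓕 :=
  ⟨({{0,1,30,45}, {0,2,41,19}, {0,3,16,43}, {0,4,18,42}} : Multiset (Finset (ZMod (25 * 2)))),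
    isCDF_helper 25 _ (by intro F hF; fin_cases hF <;> rfl) (by decide) (by decide) (by decide)⟩

set_option maxRecDepth 4000 in
set_option maxHeartbeats 2000000 in
lemma cdf_31 : ∃ 𝓕 : Multiset (Finset (ZMod (31 * 2))), IsCDF 31 2 4 𝓕 :=
  ⟨({{0,1,41,37}, {0,2,44,34}, {0,3,48,9}, {0,5,38,51}, {0,7,15,50}} : Multiset (Finset (ZMod (31 * 2)))),
    isCDF_helper 31 _ (by intro F hF; fin_cases hF <;> rfl) (by decide) (by decide) (by decide)⟩

set_option maxRecDepth 4000 in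
set_option maxHeartbeats 2000000 in
lemma cdf_37 : ∃ 𝓕 : Multiset (Finset (ZMod (37 * 2))), IsCDF 37 2 4 𝓕 :=
  ⟨({{0,1,61,52}, {0,2,47,43}, {0,3,19,39}, {0,5,26,11}, {0,7,57,49}, {0,10,28,40}} : Multiset (Finset (ZMod (37 * 2)))),
    isCDF_helper 37 _ (by intro F hF; fin_cases hF <;> rfl) (by decide) (by decide) (by decide)⟩

set_option maxRecDepth 4000 in
set_option maxHeartbeats 2000000 in
lemma cdf_43 : ∃ 𝓕 : Multiset (Finset (ZMod (43 * 2))), IsCDF 43 2 4 𝓕 :=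
  ⟨({{0,1,23,41}, {0,2,6,15}, {0,3,69,55}, {0,5,21,33}, {0,7,44,54}, {0,8,56,27}, {0,11,35,61}} : Multiset (Finset (ZMod (43 * 2)))),
    isCDF_helper 43 _ (by intro F hF; fin_cases hF <;> rfl) (by decide) (by decide) (by decide)⟩

set_option maxRecDepth 4000 in
set_option maxHeartbeats 2000000 in
lemma cdf_49 : ∃ 𝓕 : Multiset (Finset (ZMod (49 * 2))), IsCDF 49 2 4 𝓕 :=
  ⟨({{0,1,14,87}, {0,2,76,36}, {0,3,32,50}, {0,4,45,30}, {0,5,82,43}, {0,6,23,67}, {0,7,35,27}, {0,9,42,88}} : Multiset (Finset (ZMod (49 * 2)))),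
    isCDF_helper 49 _ (by intro F hF; fin_cases hF <;> rfl) (by decide) (by decide) (by decide)⟩

set_option maxRecDepth 4000 in
set_option maxHeartbeats 2000000 in
lemma cdf_55 : ∃ 𝓕 : Multiset (Finset (ZMod (55 * 2))), IsCDF 55 2 4 𝓕 :=
  ⟨({{0,1,60,58}, {0,3,8,95}, {0,4,25,86}, {0,6,46,79}, {0,7,72,101}, {0,10,98,78}, {0,11,47,91}, {0,13,67,84}, {0,14,41,76}} : Multiset (Finset (ZMod (55 * 2)))),
    isCDF_helper 55 _ (by intro F hF; fin_cases hF <;> rfl) (by decide) (by decide) (by decide)⟩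

set_option maxRecDepth 4000 in
set_option maxHeartbeats 2000000 in
lemma cdf_61 : ∃ 𝓕 : Multiset (Finset (ZMod (61 * 2))), IsCDF 61 2 4 𝓕 :=
  ⟨({{0,1,95,53}, {0,2,117,18}, {0,3,86,82}, {0,6,77,63}, {0,8,29,96}, {0,9,111,24}, {0,10,54,76}, {0,12,84,37}, {0,13,73,103}, {0,17,91,58}} : Multiset (Finset (ZMod (61 * 2)))),
    isCDF_helper 61 _ (by intro F hF; fin_cases hF <;> rfl) (by decide) (by decide) (by decide)⟩

set_option maxRecDepth 4000 in
set_option maxHeartbeats 2000000 in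
lemma cdf_67 : ∃ 𝓕 : Multiset (Finset (ZMod (67 * 2))), IsCDF 67 2 4 𝓕 :=
  ⟨({{0,1,127,113}, {0,2,31,83}, {0,3,39,109}, {0,4,17,96}, {0,5,68,74}, {0,9,100,85}, {0,10,33,90}, {0,11,56,97}, {0,12,62,30}, {0,16,115,40}, {0,20,47,108}} : Multiset (Finset (ZMod (67 * 2)))),
    isCDF_helper 67 _ (by intro F hF; fin_cases hF <;> rfl) (by decide) (by decide) (by decide)⟩

set_option maxRecDepth 4000 in
set_option maxHeartbeats 2000000 in
lemma cdf_73 : ∃ 𝓕 : Multiset (Finset (ZMod (73 * 2))), IsCDF 73 2 4 𝓕 :=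
  ⟨({{0,1,32,93}, {0,2,98,102}, {0,3,12,41}, {0,5,57,81}, {0,6,110,129}, {0,7,87,132}, {0,8,26,51}, {0,10,77,116}, {0,11,27,83}, {0,13,84,112}, {0,15,37,97}, {0,20,55,88}} : Multiset (Finset (ZMod (73 * 2)))),
    isCDF_helper 73 _ (by intro F hF; fin_cases hF <;> rfl) (by decide) (by decide) (by decide)⟩

set_option maxRecDepth 4000 in
set_option maxHeartbeats 2000000 in
lemma cdf_79 : ∃ 𝓕 : Multiset (Finset (ZMod (79 * 2))), IsCDF 79 2 4 𝓕 :=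
  ⟨({{0,1,35,85}, {0,2,129,132}, {0,4,67,121}, {0,5,70,141}, {0,6,20,139}, {0,7,66,122}, {0,8,46,114}, {0,9,86,146}, {0,10,110,128}, {0,11,62,145}, {0,15,47,116}, {0,16,61,125}, {0,23,78,105}} : Multiset (Finset (ZMod (79 * 2)))),
    isCDF_helper 79 _ (by intro F hF; fin_cases hF <;> rfl) (by decide) (by decide) (by decide)⟩

set_option maxRecDepth 4000 in
set_option maxHeartbeats 2000000 in
lemma cdf_85 : ∃ 𝓕 : Multiset (Finset (ZMod (85 * 2))), IsCDF 85 2 4 𝓕 :=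
  ⟨({{0,1,115,139}, {0,2,96,131}, {0,3,67,125}, {0,4,157,165}, {0,6,97,148}, {0,7,27,117}, {0,10,121,151}, {0,11,23,88}, {0,14,61,101}, {0,15,52,78}, {0,16,86,120}, {0,18,62,134}, {0,21,46,89}, {0,33,75,132}} : Multiset (Finset (ZMod (85 * 2)))),
    isCDF_helper 85 _ (by intro F hF; fin_cases hF <;> rfl) (by decide) (by decide) (by decide)⟩

set_option maxRecDepth 4000 in
set_option maxHeartbeats 2000000 in
lemma cdf_91 : ∃ 𝓕 : Multiset (Finset (ZMod (91 * 2))), IsCDF 91 2 4 𝓕 :=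
  ⟨({{0,1,143,178}, {0,2,132,153}, {0,3,16,128}, {0,6,34,115}, {0,7,127,165}, {0,8,66,84}, {0,9,103,159}, {0,10,46,93}, {0,11,108,134}, {0,12,90,133}, {0,14,82,145}, {0,15,80,110}, {0,19,64,141}, {0,20,53,160}, {0,25,111,138}} : Multiset (Finset (ZMod (91 * 2)))),
    isCDF_helper 91 _ (by intro F hF; fin_cases hF <;> rfl) (by decide) (by decide) (by decide)⟩

set_option maxRecDepth 4000 in
set_option maxHeartbeats 2000000 in
lemma cdf_97 : ∃ 𝓕 : Multiset (Finset (ZMod (97 * 2))), IsCDF 97 2 4 𝓕 :=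
  ⟨({{0,1,93,170}, {0,2,108,114}, {0,3,15,168}, {0,4,60,73}, {0,5,58,171}, {0,7,142,152}, {0,8,74,95}, {0,9,55,98}, {0,11,48,83}, {0,14,75,178}, {0,17,79,143}, {0,18,40,158}, {0,19,63,163}, {0,20,47,85}, {0,32,110,155}, {0,33,67,137}} : Multiset (Finset (ZMod (97 * 2)))),
    isCDF_helper 97 _ (by intro F hF; fin_cases hF <;> rfl) (by decide) (by decide) (by decide)⟩

set_option maxRecDepth 4000 in
set_option maxHeartbeats 2000000 in
lemma cdf_103 : ∃ 𝓕 : Multiset (Finset (ZMod (103 * 2))), IsCDF 103 2 4 𝓕 :=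
  ⟨({{0,1,18,81}, {0,2,186,198}, {0,3,82,117}, {0,4,112,123}, {0,5,38,77}, {0,6,122,153}, {0,7,28,74}, {0,9,95,146}, {0,13,115,151}, {0,14,43,164}, {0,15,52,145}, {0,16,41,182}, {0,19,64,152}, {0,23,70,179}, {0,26,75,174}, {0,30,101,158}, {0,34,96,140}} : Multiset (Finset (ZMod (103 * 2)))),
    isCDF_helper 103 _ (by intro F hF; fin_cases hF <;> rfl) (by decide) (by decide) (by decide)⟩

/-- A `(2g,2,4,1)`-CDF exists for every integer `g ≡ 1 (mod 6)` with `7 ≤ g ≤ 103`. -/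
theorem stmt_7 (g : ℕ) (hmod : g % 6 = 1) (h1 : 7 ≤ g) (h2 : g ≤ 103) :
    ∃ 𝓕 : Multiset (Finset (ZMod (g * 2))), IsCDF g 2 4 𝓕 := by
  interval_cases g <;>
    first
      | (exfalso; omega)
      | exact cdf_7
      | exact cdf_13
      | exact cdf_19
      | exact cdf_25
      | exact cdf_31
      | exact cdf_37
      | exact cdf_43
      | exact cdf_49
      | exact cdf_55
      | exact cdf_61
      | exact cdf_67
      | exact cdf_73
      | exact cdf_79
      | exact cdf_85
      | exact cdf_91
      | exact cdf_97
      | exact cdf_103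
end

section
/- There exists a (6g,6,4,1)-CDF for every odd integer g with 7 ≤ g ≤ 35. -/
set_option maxRecDepth 40000

def checkCDF (m gn k : ℕ) [NeZero m] (𝓕 : Multiset (Finset (ZMod m))) : Prop :=
  (Multiset.countP (fun F => F.card = k) 𝓕 = Multiset.card 𝓕) ∧
  (∀ x : ZMod m, (𝓕.bind blockDiffs).count x = if gn ∣ x.val then 0 else 1)

instance (m gn k : ℕ) [NeZero m] (𝓕 : Multiset (Finset (ZMod m))) :
    Decidable (checkCDF m gn k 𝓕) := by unfold checkCDF; infer_instance

lemma zmult_iff (g : ℕ) (hg : 0 < g) (x : ZMod (g * 6)) :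
    x ∈ AddSubgroup.zmultiples ((g : ZMod (g * 6))) ↔ g ∣ x.val := by
  have : NeZero (g * 6) := ⟨by omega⟩
  rw [AddSubgroup.mem_zmultiples_iff]
  constructor
  · rintro ⟨n, hn⟩
    rw [← hn, zsmul_eq_mul, ZMod.val_mul]
    have hgv : ((g : ZMod (g * 6))).val = g := by
      rw [ZMod.val_natCast, Nat.mod_eq_of_lt (by omega)]
    rw [hgv]
    exact (Nat.dvd_mod_iff ⟨6, rfl⟩).mpr (dvd_mul_left g _)
  · rintro ⟨t, ht⟩
    refine ⟨(t : ℤ), ?_⟩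
    have hx : ((x.val : ℕ) : ZMod (g * 6)) = x := (ZMod.natCast_val x).trans (ZMod.cast_id _ _)
    rw [zsmul_eq_mul, ← hx, ht]
    push_cast
    ring

lemma check_to_is (g k : ℕ) (hg : 0 < g) (𝓕 : Multiset (Finset (ZMod (g * 6))))
    (h : @checkCDF (g * 6) g k ⟨by omega⟩ 𝓕) : IsCDF g 6 k 𝓕 := by
  obtain ⟨hc, hx⟩ := h
  refine ⟨Multiset.countP_eq_card.mp hc, fun x hm => ?_, fun x hm => ?_⟩
  · rw [hx x, if_pos ((zmult_iff g hg x).mp hm)]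
  · rw [hx x, if_neg (fun hd => hm ((zmult_iff g hg x).mpr hd))]

lemma cdf7 : ∃ 𝓕 : Multiset (Finset (ZMod (7 * 6))), IsCDF 7 6 4 𝓕 :=
  ⟨({({0,1,9,13} : Finset (ZMod (7*6))), {0,2,5,24}, {0,6,17,32}} : Multiset _), check_to_is 7 4 (by norm_num) _ (by decide)⟩

lemma cdf9 : ∃ 𝓕 : Multiset (Finset (ZMod (9 * 6))), IsCDF 9 6 4 𝓕 :=
  ⟨({({0,1,38,41} : Finset (ZMod (9*6))), {0,2,22,48}, {0,4,15,25}, {0,5,24,47}} : Multiset _), check_to_is 9 4 (by norm_num) _ (by decide)⟩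

lemma cdf11 : ∃ 𝓕 : Multiset (Finset (ZMod (11 * 6))), IsCDF 11 6 4 𝓕 :=
  ⟨({({0,1,14,37} : Finset (ZMod (11*6))), {0,2,5,59}, {0,4,20,28}, {0,6,25,40}, {0,10,27,45}} : Multiset _), check_to_is 11 4 (by norm_num) _ (by decide)⟩

lemma cdf13 : ∃ 𝓕 : Multiset (Finset (ZMod (13 * 6))), IsCDF 13 6 4 𝓕 :=
  ⟨({({0,1,59,75} : Finset (ZMod (13*6))), {0,2,49,73}, {0,6,17,38}, {0,8,30,42}, {0,9,37,64}, {0,10,45,63}} : Multiset _), check_to_is 13 4 (by norm_num) _ (by decide)⟩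

lemma cdf15 : ∃ 𝓕 : Multiset (Finset (ZMod (15 * 6))), IsCDF 15 6 4 𝓕 :=
  ⟨({({0,1,44,50} : Finset (ZMod (15*6))), {0,2,72,83}, {0,3,27,56}, {0,4,39,62}, {0,5,59,76}, {0,8,21,33}, {0,10,26,48}} : Multiset _), check_to_is 15 4 (by norm_num) _ (by decide)⟩

lemma cdf17 : ∃ 𝓕 : Multiset (Finset (ZMod (17 * 6))), IsCDF 17 6 4 𝓕 :=
  ⟨({({0,1,25,94} : Finset (ZMod (17*6))), {0,2,42,88}, {0,3,84,95}, {0,4,30,57}, {0,5,44,64}, {0,6,47,79}, {0,12,31,66}, {0,13,28,50}} : Multiset _), check_to_is 17 4 (by norm_num) _ (by decide)⟩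

lemma cdf19 : ∃ 𝓕 : Multiset (Finset (ZMod (19 * 6))), IsCDF 19 6 4 𝓕 :=
  ⟨({({0,1,25,108} : Finset (ZMod (19*6))), {0,2,42,65}, {0,3,16,78}, {0,4,9,106}, {0,10,30,58}, {0,11,61,79}, {0,14,41,85}, {0,15,60,92}, {0,21,47,80}} : Multiset _), check_to_is 19 4 (by norm_num) _ (by decide)⟩

lemma cdf21 : ∃ 𝓕 : Multiset (Finset (ZMod (21 * 6))), IsCDF 21 6 4 𝓕 :=
  ⟨({({0,1,60,109} : Finset (ZMod (21*6))), {0,2,113,123}, {0,4,26,38}, {0,6,62,81}, {0,7,47,102}, {0,8,35,44}, {0,11,48,76}, {0,14,43,68}, {0,16,46,103}, {0,20,52,93}} : Multiset _), check_to_is 21 4 (by norm_num) _ (by decide)⟩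

lemma cdf23 : ∃ 𝓕 : Multiset (Finset (ZMod (23 * 6))), IsCDF 23 6 4 𝓕 :=
  ⟨({({0,1,130,133} : Finset (ZMod (23*6))), {0,2,95,110}, {0,4,66,105}, {0,7,98,125}, {0,10,48,67}, {0,11,25,89}, {0,12,53,116}, {0,16,70,96}, {0,17,61,120}, {0,21,73,109}, {0,24,56,107}} : Multiset _), check_to_is 23 4 (by norm_num) _ (by decide)⟩

lemma cdf25 : ∃ 𝓕 : Multiset (Finset (ZMod (25 * 6))), IsCDF 25 6 4 𝓕 :=
  ⟨({({0,1,71,134} : Finset (ZMod (25*6))), {0,2,119,140}, {0,3,40,85}, {0,4,48,55}, {0,5,67,86}, {0,6,60,136}, {0,8,109,135}, {0,9,27,38}, {0,13,59,116}, {0,22,58,111}, {0,24,56,122}, {0,30,73,108}} : Multiset _), check_to_is 25 4 (by norm_num) _ (by decide)⟩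

lemma cdf27 : ∃ 𝓕 : Multiset (Finset (ZMod (27 * 6))), IsCDF 27 6 4 𝓕 :=
  ⟨({({0,1,42,148} : Finset (ZMod (27*6))), {0,2,124,152}, {0,3,53,105}, {0,4,78,111}, {0,5,70,90}, {0,6,35,93}, {0,7,130,143}, {0,8,31,94}, {0,9,98,128}, {0,11,47,114}, {0,16,96,141}, {0,17,61,79}, {0,22,46,71}} : Multiset _), check_to_is 27 4 (by norm_num) _ (by decide)⟩

lemma cdf29 : ∃ 𝓕 : Multiset (Finset (ZMod (29 * 6))), IsCDF 29 6 4 𝓕 :=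
  ⟨({({0,1,135,156} : Finset (ZMod (29*6))), {0,2,16,117}, {0,3,132,136}, {0,5,84,128}, {0,6,36,91}, {0,7,35,121}, {0,8,71,149}, {0,9,70,81}, {0,10,64,77}, {0,12,137,152}, {0,17,69,143}, {0,20,82,147}, {0,23,99,131}, {0,24,50,118}} : Multiset _), check_to_is 29 4 (by norm_num) _ (by decide)⟩

lemma cdf31 : ∃ 𝓕 : Multiset (Finset (ZMod (31 * 6))), IsCDF 31 6 4 𝓕 :=
  ⟨({({0,1,42,136} : Finset (ZMod (31*6))), {0,2,109,165}, {0,3,49,177}, {0,4,112,173}, {0,5,45,65}, {0,6,105,164}, {0,7,95,129}, {0,8,114,147}, {0,10,96,172}, {0,11,48,66}, {0,15,44,69}, {0,16,84,119}, {0,19,104,134}, {0,26,53,89}, {0,32,75,148}} : Multiset _), check_to_is 31 4 (by norm_num) _ (by decide)⟩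

lemma cdf33 : ∃ 𝓕 : Multiset (Finset (ZMod (33 * 6))), IsCDF 33 6 4 𝓕 :=
  ⟨({({0,1,127,146} : Finset (ZMod (33*6))), {0,2,162,186}, {0,3,104,159}, {0,4,62,106}, {0,5,15,157}, {0,6,88,117}, {0,7,85,180}, {0,8,67,137}, {0,9,158,185}, {0,11,90,164}, {0,16,114,177}, {0,17,68,151}, {0,20,48,80}, {0,23,109,144}, {0,26,91,167}, {0,30,105,155}} : Multiset _), check_to_is 33 4 (by norm_num) _ (by decide)⟩

lemma cdf35 : ∃ 𝓕 : Multiset (Finset (ZMod (35 * 6))), IsCDF 35 6 4 𝓕 :=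
  ⟨({({0,1,61,65} : Finset (ZMod (35*6))), {0,2,126,182}, {0,3,79,193}, {0,5,32,68}, {0,6,161,195}, {0,7,53,92}, {0,8,88,181}, {0,9,25,75}, {0,10,51,62}, {0,12,83,165}, {0,13,120,179}, {0,14,47,116}, {0,18,72,115}, {0,19,100,123}, {0,22,48,121}, {0,24,91,133}, {0,38,112,170}} : Multiset _), check_to_is 35 4 (by norm_num) _ (by decide)⟩

/-- A `(6g,6,4,1)`-CDF exists for every odd integer `g` with `7 ≤ g ≤ 35`. -/
theorem stmt_10 (g : ℕ) (hodd : Odd g) (h1 : 7 ≤ g) (h2 : g ≤ 35) :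
    ∃ 𝓕 : Multiset (Finset (ZMod (g * 6))), IsCDF g 6 4 𝓕 := by
  interval_cases g
  · exact cdf7
  · exact absurd hodd (by decide)
  · exact cdf9
  · exact absurd hodd (by decide)
  · exact cdf11
  · exact absurd hodd (by decide)
  · exact cdf13
  · exact absurd hodd (by decide)
  · exact cdf15
  · exact absurd hodd (by decide)
  · exact cdf17
  · exact absurd hodd (by decide)
  · exact cdf19
  · exact absurd hodd (by decide)
  · exact cdf21
  · exact absurd hodd (by decide)
  · exact cdf23
  · exact absurd hodd (by decide)
  · exact cdf25
  · exact absurd hodd (by decide)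
  · exact cdf27
  · exact absurd hodd (by decide)
  · exact cdf29
  · exact absurd hodd (by decide)
  · exact cdf31
  · exact absurd hodd (by decide)
  · exact cdf33
  · exact absurd hodd (by decide)
  · exact cdf35
end

section
/- For every positive integer h, there does not exist a (4h,h,4,1)-CDF. -/
/-- Auxiliary: sum of a filtered bind is zero if each filtered piece sums to zero. -/
lemma aux_sum_filter_bind {α β : Type*} [AddCommMonoid β] (p : β → Prop) [DecidablePred p]
    (s : Multiset α) (f : α → Multiset β) (hs : ∀ a ∈ s, ((f a).filter p).sum = 0) :
    ((s.bind f).filter p).sum = 0 := by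
  induction s using Multiset.induction with
  | empty => simp
  | cons a s ih =>
    rw [Multiset.cons_bind, Multiset.filter_add, Multiset.sum_add,
      hs a (Multiset.mem_cons_self a s),
      ih (fun b hb => hs b (Multiset.mem_cons_of_mem hb)), add_zero]

/-- For every positive integer `h`, there is no `(4h,h,4,1)`-CDF. -/
theorem stmt_13 (h : ℕ) (hh : 0 < h) :
    ¬ ∃ 𝓕 : Multiset (Finset (ZMod (4 * h))), IsCDF 4 h 4 𝓕 := by
  rintro ⟨𝓕, hcard, h0, h1⟩
  haveI : NeZero (4 * h) := ⟨by omega⟩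
  set π : ZMod (4 * h) →+* ZMod 4 := ZMod.castHom ⟨h, rfl⟩ (ZMod 4) with hπ
  have hπval : ∀ x : ZMod (4 * h), π x = ((x.val : ℕ) : ZMod 4) := by
    intro x
    rw [hπ, ZMod.castHom_apply, ZMod.natCast_val]
  have hπ4 : π (((4 : ℕ) : ZMod (4 * h))) = 0 := by
    rw [map_natCast]; decide
  -- kernel characterization
  have hker : ∀ x : ZMod (4 * h),
      x ∈ AddSubgroup.zmultiples (((4 : ℕ) : ZMod (4 * h))) ↔ π x = 0 := by
    intro x
    constructor
    · rintro hx
      obtain ⟨k, rfl⟩ := AddSubgroup.mem_zmultiples_iff.mp hx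
      rw [map_zsmul, hπ4, smul_zero]
    · intro hx
      rw [hπval] at hx
      obtain ⟨m, hm⟩ := (ZMod.natCast_eq_zero_iff x.val 4).mp hx
      refine AddSubgroup.mem_zmultiples_iff.mpr ⟨(m : ℤ), ?_⟩
      have hx' : x = ((4 * m : ℕ) : ZMod (4 * h)) := by
        rw [← hm, ZMod.natCast_val, ZMod.cast_id]
      rw [hx', zsmul_eq_mul]
      push_cast
      ring
  -- elements of a block are in distinct fibers of π
  have hblock : ∀ F ∈ 𝓕, ∀ a ∈ F, ∀ b ∈ F, π a = π b → a = b := by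
    intro F hF a ha b hb hab
    by_contra hne
    have hmem : a - b ∈ blockDiffs F := by
      refine Multiset.mem_map.mpr ⟨(a, b), ?_, rfl⟩
      rw [Finset.mem_val, Finset.mem_filter, Finset.mem_product]
      exact ⟨⟨ha, hb⟩, hne⟩
    have hmem' : a - b ∈ 𝓕.bind blockDiffs := Multiset.mem_bind.mpr ⟨F, hF, hmem⟩
    have hpos : 0 < (𝓕.bind blockDiffs).count (a - b) := Multiset.count_pos.mpr hmem'
    have hzero : (𝓕.bind blockDiffs).count (a - b) = 0 := by
      apply h0
      exact (hker (a - b)).mpr (by rw [map_sub, hab, sub_self])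
    omega
  -- each fiber of π meets each block exactly once
  have hfiber : ∀ F ∈ 𝓕, ∀ u : ZMod 4, (F.filter fun b => π b = u).card = 1 := by
    intro F hF u
    have himg : F.image π = Finset.univ := by
      apply Finset.eq_univ_of_card
      rw [Finset.card_image_of_injOn (fun a ha b hb hab => hblock F hF a ha b hb hab),
        hcard F hF]
      rfl
    have hu : u ∈ F.image π := by rw [himg]; exact Finset.mem_univ u
    obtain ⟨b, hb, hbu⟩ := Finset.mem_image.mp hu
    rw [Finset.card_eq_one]
    refine ⟨b, ?_⟩
    ext c
    simp only [Finset.mem_filter, Finset.mem_singleton]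
    constructor
    · rintro ⟨hc, hcu⟩
      exact hblock F hF c hc b hb (hcu.trans hbu.symm)
    · rintro rfl
      exact ⟨hb, hbu⟩
  -- per-block: differences in the fiber of 1 sum to zero
  have hsum_block : ∀ F ∈ 𝓕, ((blockDiffs F).filter (fun d => π d = 1)).sum = 0 := by
    intro F hF
    show ((((F ×ˢ F).filter fun p => p.1 ≠ p.2).val.map fun p => p.1 - p.2).filter
        (fun d => π d = 1)).sum = 0
    rw [Multiset.filter_map, ← Finset.filter_val, Finset.filter_filter]
    have hcongr : ((F ×ˢ F).filter fun p => p.1 ≠ p.2 ∧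
        ((fun d => π d = 1) ∘ fun p : ZMod (4*h) × ZMod (4*h) => p.1 - p.2) p)
        = (F ×ˢ F).filter fun p => π p.2 = π p.1 - 1 := by
      apply Finset.filter_congr
      intro p _
      simp only [Function.comp]
      constructor
      · rintro ⟨_, hd⟩
        rw [map_sub] at hd
        rw [eq_sub_iff_add_eq]
        linear_combination -hd
      · intro hd
        have h1' : π (p.1 - p.2) = 1 := by
          rw [map_sub, hd]; ring
        refine ⟨fun hne => ?_, h1'⟩
        rw [hne] at hd
        have : (1 : ZMod 4) = 0 := by linear_combination hd
        exact absurd this (by decide)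
    rw [hcongr, ← Finset.sum_eq_multiset_sum]
    rw [Finset.sum_sub_distrib]
    have hA : (∑ p ∈ (F ×ˢ F).filter fun p => π p.2 = π p.1 - 1, p.1) = ∑ a ∈ F, a := by
      rw [Finset.sum_filter, Finset.sum_product]
      refine Finset.sum_congr rfl fun a _ => ?_
      rw [← Finset.sum_filter, Finset.sum_const, hfiber F hF (π a - 1), one_smul]
    have hB : (∑ p ∈ (F ×ˢ F).filter fun p => π p.2 = π p.1 - 1, p.2) = ∑ b ∈ F, b := by
      rw [Finset.sum_filter, Finset.sum_product, Finset.sum_comm]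
      refine Finset.sum_congr rfl fun b _ => ?_
      have hiff : ∀ a ∈ F, (if π b = π a - 1 then b else 0)
          = if π a = π b + 1 then b else 0 := by
        intro a _
        refine if_congr ?_ rfl rfl
        rw [eq_sub_iff_add_eq, eq_comm]
      rw [Finset.sum_congr rfl hiff, ← Finset.sum_filter, Finset.sum_const,
        hfiber F hF (π b + 1), one_smul]
    rw [hA, hB, sub_self]
  -- identify the filtered difference multiset with the fiber of 1
  have hmulti : (𝓕.bind blockDiffs).filter (fun d => π d = 1)
      = (Finset.univ.filter fun x : ZMod (4 * h) => π x = 1).val := by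
    apply Multiset.ext.mpr
    intro x
    rw [Multiset.count_filter]
    by_cases hx : π x = 1
    · have hxH : x ∉ AddSubgroup.zmultiples (((4 : ℕ) : ZMod (4 * h))) := by
        intro hmem
        rw [(hker x).mp hmem] at hx
        exact absurd hx (by decide)
      rw [if_pos hx, h1 x hxH]
      have : x ∈ (Finset.univ.filter fun x : ZMod (4 * h) => π x = 1).val := by
        rw [Finset.mem_val, Finset.mem_filter]
        exact ⟨Finset.mem_univ x, hx⟩
      exact (Multiset.count_eq_one_of_mem (Finset.univ.filter
        fun x : ZMod (4 * h) => π x = 1).nodup this).symm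
    · rw [if_neg hx]
      refine (Multiset.count_eq_zero_of_notMem ?_).symm
      intro hmem
      rw [Finset.mem_val, Finset.mem_filter] at hmem
      exact hx hmem.2
  -- therefore the sum of the fiber of 1 is zero
  have hzero : (∑ x ∈ Finset.univ.filter fun x : ZMod (4 * h) => π x = 1, x) = 0 := by
    rw [Finset.sum_eq_multiset_sum, Multiset.map_id']
    rw [← hmulti]
    exact aux_sum_filter_bind _ 𝓕 blockDiffs hsum_block
  -- compute the fiber of 1 explicitly
  have himage : (Finset.univ.filter fun x : ZMod (4 * h) => π x = 1)
      = (Finset.range h).image (fun k : ℕ => ((1 + 4 * k : ℕ) : ZMod (4 * h))) := by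
    ext x
    simp only [Finset.mem_filter, Finset.mem_univ, true_and, Finset.mem_image,
      Finset.mem_range]
    constructor
    · intro hx
      rw [hπval] at hx
      have hmod : x.val % 4 = 1 := by
        have := (ZMod.natCast_eq_natCast_iff x.val 1 4).mp (by exact_mod_cast hx)
        simpa [Nat.ModEq] using this
      have hlt : x.val < 4 * h := ZMod.val_lt x
      refine ⟨x.val / 4, by omega, ?_⟩
      have : 1 + 4 * (x.val / 4) = x.val := by omega
      rw [this, ZMod.natCast_val, ZMod.cast_id]
    · rintro ⟨k, hk, rfl⟩
      rw [hπval, ZMod.val_cast_of_lt (by omega)]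
      push_cast
      rw [show ((4 : ZMod 4)) = 0 by decide]
      ring
  set T : ℕ := ∑ k ∈ Finset.range h, k with hT
  have hTgauss : T * 2 = h * (h - 1) := Finset.sum_range_id_mul_two h
  have hsum_val : (∑ x ∈ Finset.univ.filter fun x : ZMod (4 * h) => π x = 1, x)
      = ((h + 4 * T : ℕ) : ZMod (4 * h)) := by
    rw [himage, Finset.sum_image ?inj]
    case inj =>
      intro a ha b hb hab
      rw [Finset.mem_coe, Finset.mem_range] at ha hb
      have ha' := ZMod.val_cast_of_lt (show 1 + 4 * a < 4 * h by omega)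
      have hb' := ZMod.val_cast_of_lt (show 1 + 4 * b < 4 * h by omega)
      have : (((1 + 4 * a : ℕ) : ZMod (4*h))).val = (((1 + 4 * b : ℕ) : ZMod (4*h))).val := by
        exact congrArg ZMod.val hab
      rw [ha', hb'] at this
      omega
    rw [← Nat.cast_sum]
    congr 1
    rw [Finset.sum_add_distrib, Finset.sum_const, Finset.card_range, ← Finset.mul_sum, ← hT]
    simp [mul_comm]
  -- derive the contradiction
  rw [hsum_val] at hzero
  have hdvd : (4 * h) ∣ (h + 4 * T) := (ZMod.natCast_eq_zero_iff _ _).mp hzero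
  obtain ⟨m, rfl⟩ : ∃ m, h = m + 1 := ⟨h - 1, by omega⟩
  have hdvd' : (4 * ((m : ℤ) + 1)) ∣ (((m : ℤ) + 1) + 4 * T) := by exact_mod_cast hdvd
  obtain ⟨c, hc⟩ := hdvd'
  have hT2 : T * 2 = (m + 1) * m := by simpa using hTgauss
  have hT' : (T : ℤ) * 2 = ((m : ℤ) + 1) * m := by exact_mod_cast hT2
  have hcancel : (2 : ℤ) + 4 * m = 8 * c := by
    have hne : ((m : ℤ) + 1) ≠ 0 := by positivity
    apply mul_left_cancel₀ hne
    linear_combination 2 * hc - 4 * hT'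
  omega
end

section
/- For every positive integer n, every cyclic (n,6,4)_3 code has at most C(n) codewords, where C(n) = n·⌊(n−1)/6⌋ if n is odd or n ≡ 2 (mod 6), and C(n) = n·⌊(n−1)/6⌋ + n/2 if n ≡ 0 or 4 (mod 6). -/
open Finset

namespace Stmt18Aux

variable {n : ℕ}

/-- Cyclic shift by `a`. -/
def Tsh (a : ZMod n) (u : ZMod n → Fin 3) : ZMod n → Fin 3 := fun j => u (j + a)

theorem tsh_tsh (a b : ZMod n) (u : ZMod n → Fin 3) :
    Tsh a (Tsh b u) = Tsh (b + a) u := by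
  funext j; simp [Tsh, add_assoc, add_comm a b]

theorem tsh_zero (u : ZMod n → Fin 3) : Tsh (0 : ZMod n) u = u := by
  funext j; simp [Tsh]

theorem tsh_mem [NeZero n] {𝓒 : Set (ZMod n → Fin 3)}
    (hcl : ∀ u ∈ 𝓒, (fun i => u (i + 1)) ∈ 𝓒) (a : ZMod n) {u} (hu : u ∈ 𝓒) :
    Tsh a u ∈ 𝓒 := by
  have key : ∀ k : ℕ, ∀ u ∈ 𝓒, Tsh ((k : ℕ) : ZMod n) u ∈ 𝓒 := by
    intro k
    induction k with
    | zero =>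
      intro u hu
      have h0 : Tsh (((0:ℕ) : ZMod n)) u = u := by funext j; simp [Tsh]
      rw [h0]; exact hu
    | succ m ih =>
      intro u hu
      have h2 := ih _ (hcl u hu)
      have h3 : Tsh ((m : ℕ) : ZMod n) (fun i => u (i + 1)) =
          Tsh (((m+1 : ℕ)) : ZMod n) u := by
        funext j
        show u (j + (m : ZMod n) + 1) = u (j + ((m+1 : ℕ) : ZMod n))
        congr 1
        push_cast
        ring
      rwa [h3] at h2
  have h4 := key a.val u hu
  have h5 : ((a.val : ℕ) : ZMod n) = a := ZMod.natCast_rightInverse a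
  rwa [h5] at h4

end Stmt18Aux

/-- A cyclic ternary constant-weight code of length `n`, weight `4` and minimum
distance `6`: a set of vectors in `{0,1,2}^n` (coordinates indexed by `Z_n`),
each of Hamming weight exactly `4`, pairwise at Hamming distance at least `6`,
and closed under the cyclic shift. -/
def IsCyclicCode643 (n : ℕ) [NeZero n] (𝓒 : Set (ZMod n → Fin 3)) : Prop :=
  (∀ u ∈ 𝓒, (Finset.univ.filter fun i => u i ≠ 0).card = 4) ∧
  (∀ u ∈ 𝓒, ∀ v ∈ 𝓒, u ≠ v → 6 ≤ hammingDist u v) ∧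
  (∀ u ∈ 𝓒, (fun i => u (i + 1)) ∈ 𝓒)

/-- The upper bound `C(n)` on the size of a cyclic `(n,6,4)_3` code. -/
def codeBound (n : ℕ) : ℕ :=
  if Odd n ∨ n % 6 = 2 then n * ((n - 1) / 6) else n * ((n - 1) / 6) + n / 2

/-- The final arithmetic: from `n·X = 4·c`, `X = b₁ + b₂`, `3·bᵥ ≤ n - 1`,
deduce the code bound. -/
theorem stmt18_arith (n c X b1 b2 : ℕ) (hsum : n * X = c * 4)
    (hsplit : X = b1 + b2) (hb1 : b1 * 3 ≤ n - 1) (hb2 : b2 * 3 ≤ n - 1) :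
    c ≤ codeBound n := by
  unfold codeBound
  by_cases h : Odd n ∨ n % 6 = 2
  · rw [if_pos h]
    rcases h with ho | h62
    · -- n odd : 4 ∣ X
      have hno : n % 2 = 1 := Nat.odd_iff.mp ho
      have hcop : Nat.Coprime 4 n := by
        have h2 : Nat.Coprime 2 n :=
          (Nat.Prime.coprime_iff_not_dvd Nat.prime_two).mpr (by omega)
        have h3 := Nat.Coprime.pow_left 2 h2
        norm_num at h3
        exact h3
      have hdvd : (4:ℕ) ∣ X := by
        refine hcop.dvd_of_dvd_mul_left ⟨c, ?_⟩
        rw [hsum]; ring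
      obtain ⟨s, hXs⟩ := hdvd
      have hcns : c = n * s := by
        have h1 : 4 * (n * s) = 4 * c := by
          have h0 : n * X = n * (4 * s) := by rw [hXs]
          rw [hsum] at h0
          calc 4 * (n * s) = n * (4 * s) := by ring
            _ = c * 4 := h0.symm
            _ = 4 * c := by ring
        exact (Nat.eq_of_mul_eq_mul_left (by norm_num) h1).symm
      have hs : s ≤ (n - 1) / 6 := by clear hsum hcns; omega
      calc c = n * s := hcns
        _ ≤ n * ((n - 1) / 6) := Nat.mul_le_mul_left n hs
    · -- n ≡ 2 mod 6
      have hX4 : X ≤ 4 * ((n - 1) / 6) := by clear hsum; omega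
      have h1 : 4 * c ≤ 4 * (n * ((n - 1) / 6)) := by
        calc 4 * c = c * 4 := by ring
          _ = n * X := hsum.symm
          _ ≤ n * (4 * ((n - 1) / 6)) := Nat.mul_le_mul_left n hX4
          _ = 4 * (n * ((n - 1) / 6)) := by ring
      exact Nat.le_of_mul_le_mul_left h1 (by norm_num)
  · rw [if_neg h]
    push_neg at h
    have heven : n % 2 = 0 := by
      rcases Nat.even_or_odd n with he | ho
      · exact Nat.even_iff.mp he
      · exact absurd ho h.1
    have h62 : n % 6 ≠ 2 := h.2
    have hXb : X ≤ 4 * ((n - 1) / 6) + 2 := by clear hsum; omega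
    obtain ⟨M, hM⟩ : ∃ M, M = n * ((n - 1) / 6) := ⟨_, rfl⟩
    have h1 : 4 * c ≤ 4 * M + 2 * n := by
      calc 4 * c = c * 4 := by ring
        _ = n * X := hsum.symm
        _ ≤ n * (4 * ((n - 1) / 6) + 2) := Nat.mul_le_mul_left n hXb
        _ = 4 * (n * ((n - 1) / 6)) + 2 * n := by ring
        _ = 4 * M + 2 * n := by rw [hM]
    rw [← hM]
    clear hsum
    omega

set_option maxHeartbeats 800000 in
open Stmt18Aux in
/-- Every cyclic `(n,6,4)_3` code has at most `C(n)` codewords. -/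
theorem stmt_18 (n : ℕ) [NeZero n] (𝓒 : Set (ZMod n → Fin 3))
    (h𝓒 : IsCyclicCode643 n 𝓒) : 𝓒.ncard ≤ codeBound n := by
  classical
  obtain ⟨hw, hd, hcl⟩ := h𝓒
  have hfin : 𝓒.Finite := Set.toFinite 𝓒
  obtain ⟨C, hC⟩ : ∃ C' : Finset (ZMod n → Fin 3), C' = hfin.toFinset := ⟨_, rfl⟩
  have memC : ∀ {u}, u ∈ C ↔ u ∈ 𝓒 := fun {u} => by
    rw [hC]; exact hfin.mem_toFinset
  have hncard : 𝓒.ncard = C.card := by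
    rw [hC]; exact Set.ncard_eq_toFinset_card 𝓒 hfin
  -- Key pair lemma: two distinct codewords cannot agree at a common support
  -- point 0 while both being nonzero at another common point t.
  have key : ∀ u ∈ 𝓒, ∀ v ∈ 𝓒, u ≠ v → ∀ t : ZMod n, t ≠ 0 →
      u 0 = v 0 → u 0 ≠ 0 → u t ≠ 0 → v t ≠ 0 → False := by
    intro u hu v hv huv t ht h00 hu0 hut hvt
    have h6 := hd u hu v hv huv
    have hDu : (univ.filter fun i => u i ≠ 0).card = 4 := hw u hu
    have hDv : (univ.filter fun i => v i ≠ 0).card = 4 := hw v hv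
    obtain ⟨Du, hDu'⟩ : ∃ s, s = univ.filter fun i => u i ≠ 0 := ⟨_, rfl⟩
    obtain ⟨Dv, hDv'⟩ : ∃ s, s = univ.filter fun i => v i ≠ 0 := ⟨_, rfl⟩
    rw [← hDu'] at hDu
    rw [← hDv'] at hDv
    have hsub : (univ.filter fun i => u i ≠ v i) ⊆ (Du ∪ Dv).erase 0 := by
      intro i hi
      rw [Finset.mem_filter] at hi
      rw [Finset.mem_erase, Finset.mem_union, hDu', hDv', Finset.mem_filter,
        Finset.mem_filter]
      constructor
      · rintro rfl; exact hi.2 h00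
      · rcases em (u i = 0) with h | h
        · right
          refine ⟨Finset.mem_univ _, fun hvz => ?_⟩
          exact hi.2 (h.trans hvz.symm)
        · exact Or.inl ⟨Finset.mem_univ _, h⟩
    have h0mem : (0 : ZMod n) ∈ Du ∪ Dv := by
      rw [Finset.mem_union, hDu', Finset.mem_filter]
      exact Or.inl ⟨Finset.mem_univ _, hu0⟩
    have hpair : ({0, t} : Finset (ZMod n)) ⊆ Du ∩ Dv := by
      intro x hx
      rw [Finset.mem_insert, Finset.mem_singleton] at hx
      rw [Finset.mem_inter, hDu', hDv', Finset.mem_filter, Finset.mem_filter]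
      rcases hx with rfl | rfl
      · exact ⟨⟨Finset.mem_univ _, hu0⟩,
          ⟨Finset.mem_univ _, fun hz => hu0 (h00.trans hz)⟩⟩
      · exact ⟨⟨Finset.mem_univ _, hut⟩, ⟨Finset.mem_univ _, hvt⟩⟩
    have h2 : 2 ≤ (Du ∩ Dv).card := by
      have hcard2 : ({0, t} : Finset (ZMod n)).card = 2 := by
        rw [Finset.card_insert_of_notMem (by simpa using Ne.symm ht),
          Finset.card_singleton]
      exact hcard2 ▸ Finset.card_le_card hpair
    have huni := Finset.card_union_add_card_inter Du Dv
    have hle : (univ.filter fun i => u i ≠ v i).card ≤ 5 := by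
      have h9 := Finset.card_le_card hsub
      rw [Finset.card_erase_of_mem h0mem] at h9
      omega
    have hdd : hammingDist u v = (univ.filter fun i => u i ≠ v i).card := rfl
    rw [hdd] at h6
    omega
  -- slot bound : at most one codeword with value v0 at 0 and support at t
  have slot : ∀ (v0 : Fin 3), v0 ≠ 0 → ∀ t : ZMod n, t ≠ 0 →
      ((C.filter fun u => u 0 = v0).filter fun u => u t ≠ 0).card ≤ 1 := by
    intro v0 hv0 t ht
    rw [Finset.card_le_one]
    intro a ha b hb
    by_contra hab
    rw [Finset.mem_filter, Finset.mem_filter] at ha hb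
    exact key a (memC.mp ha.1.1) b (memC.mp hb.1.1) hab t ht
      (ha.1.2.trans hb.1.2.symm) (by rw [ha.1.2]; exact hv0) ha.2 hb.2
  -- per-value counting: 3 * b_v ≤ n - 1
  have hBv : ∀ (v0 : Fin 3), v0 ≠ 0 →
      (C.filter fun u => u 0 = v0).card * 3 ≤ n - 1 := by
    intro v0 hv0
    have hstep : ∀ u ∈ (C.filter fun u => u 0 = v0),
        ((univ.erase (0:ZMod n)).filter fun t => u t ≠ 0).card = 3 := by
      intro u hu
      rw [Finset.mem_filter] at hu
      have w4 := hw u (memC.mp hu.1)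
      rw [Finset.filter_erase, Finset.card_erase_of_mem
        (by rw [Finset.mem_filter]
            exact ⟨Finset.mem_univ _, by rw [hu.2]; exact hv0⟩),
        w4]
    calc (C.filter fun u => u 0 = v0).card * 3
        = ∑ _u ∈ (C.filter fun u => u 0 = v0), 3 := by
          rw [Finset.sum_const, smul_eq_mul]
      _ = ∑ u ∈ (C.filter fun u => u 0 = v0),
            ((univ.erase (0:ZMod n)).filter fun t => u t ≠ 0).card :=
          Finset.sum_congr rfl (fun u hu => (hstep u hu).symm)
      _ = ∑ u ∈ (C.filter fun u => u 0 = v0), ∑ t ∈ univ.erase (0:ZMod n),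
            if u t ≠ 0 then 1 else 0 :=
          Finset.sum_congr rfl (fun u _ => Finset.card_filter _ _)
      _ = ∑ t ∈ univ.erase (0:ZMod n), ∑ u ∈ (C.filter fun u => u 0 = v0),
            if u t ≠ 0 then 1 else 0 := Finset.sum_comm
      _ = ∑ t ∈ univ.erase (0:ZMod n),
            ((C.filter fun u => u 0 = v0).filter fun u => u t ≠ 0).card :=
          Finset.sum_congr rfl (fun t _ => (Finset.card_filter _ _).symm)
      _ ≤ ∑ _t ∈ univ.erase (0:ZMod n), 1 :=
          Finset.sum_le_sum (fun t ht => slot v0 hv0 t (Finset.mem_erase.mp ht).1)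
      _ = (univ.erase (0:ZMod n)).card := by
          rw [Finset.sum_const, smul_eq_mul, mul_one]
      _ = n - 1 := by
          rw [Finset.card_erase_of_mem (Finset.mem_univ _), Finset.card_univ,
            ZMod.card]
  -- shift invariance of the count
  have hTC : ∀ a : ZMod n, ∀ u ∈ C, Tsh a u ∈ C := fun a u hu =>
    memC.mpr (tsh_mem hcl a (memC.mp hu))
  have hXi : ∀ i : ZMod n, (C.filter fun u => u i ≠ 0).card =
      (C.filter fun u => u 0 ≠ 0).card := by
    intro i
    refine Finset.card_bij' (fun u _ => Tsh i u) (fun v _ => Tsh (-i) v) ?_ ?_ ?_ ?_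
    · intro a ha
      rw [Finset.mem_filter] at ha ⊢
      refine ⟨hTC i a ha.1, ?_⟩
      show a (0 + i) ≠ 0
      rw [zero_add]
      exact ha.2
    · intro b hb
      rw [Finset.mem_filter] at hb ⊢
      refine ⟨hTC (-i) b hb.1, ?_⟩
      show b (i + -i) ≠ 0
      rw [add_neg_cancel]
      exact hb.2
    · intro a _
      show Tsh (-i) (Tsh i a) = a
      rw [tsh_tsh, add_neg_cancel, tsh_zero]
    · intro b _
      show Tsh i (Tsh (-i) b) = b
      rw [tsh_tsh, neg_add_cancel, tsh_zero]
  -- global double count : n * X = card * 4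
  have hsum : n * (C.filter fun u => u 0 ≠ 0).card = C.card * 4 := by
    have hA : ∑ i : ZMod n, (C.filter fun u => u i ≠ 0).card =
        n * (C.filter fun u => u 0 ≠ 0).card := by
      rw [Finset.sum_congr rfl (fun i _ => hXi i), Finset.sum_const, smul_eq_mul,
        Finset.card_univ, ZMod.card]
    have hB : ∑ i : ZMod n, (C.filter fun u => u i ≠ 0).card = C.card * 4 := by
      calc ∑ i : ZMod n, (C.filter fun u => u i ≠ 0).card
          = ∑ i : ZMod n, ∑ u ∈ C, if u i ≠ 0 then 1 else 0 :=
            Finset.sum_congr rfl (fun i _ => Finset.card_filter _ _)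
        _ = ∑ u ∈ C, ∑ i : ZMod n, if u i ≠ 0 then 1 else 0 := Finset.sum_comm
        _ = ∑ u ∈ C, (univ.filter fun i => u i ≠ 0).card :=
            Finset.sum_congr rfl (fun u _ => (Finset.card_filter _ _).symm)
        _ = ∑ _u ∈ C, 4 := Finset.sum_congr rfl (fun u hu => hw u (memC.mp hu))
        _ = C.card * 4 := by rw [Finset.sum_const, smul_eq_mul]
    rw [← hA, hB]
  -- split X = b1 + b2
  have hiff : ∀ x : Fin 3, x ≠ 0 ↔ (x = 1 ∨ x = 2) := by decide
  have hsplit : (C.filter fun u => u 0 ≠ 0).card =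
      (C.filter fun u => u 0 = 1).card + (C.filter fun u => u 0 = 2).card := by
    have hunion : (C.filter fun u => u 0 ≠ 0) =
        (C.filter fun u => u 0 = 1) ∪ (C.filter fun u => u 0 = 2) := by
      rw [← Finset.filter_or]
      exact Finset.filter_congr (fun u _ => hiff (u 0))
    have hdisj : Disjoint (C.filter fun u => u 0 = 1)
        (C.filter fun u => u 0 = 2) := by
      rw [Finset.disjoint_left]
      intro u h1 h2
      rw [Finset.mem_filter] at h1 h2
      rw [h1.2] at h2
      exact absurd h2.2 (by decide)
    rw [hunion, Finset.card_union_of_disjoint hdisj]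
  rw [hncard]
  exact stmt18_arith n C.card _ _ _ hsum hsplit (hBv 1 (by decide)) (hBv 2 (by decide))
end
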